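/- arXiv:1908.03893 — 11 statements merged into one kernel-verified Lean document; each statement's English description precedes it below -/
import Mathlib

section
/- Let S_n be the star on n ≥ 2 vertices and α ∈ [0,1]. The eigenvalues of the α-distance matrix D_α(S_n), listed with multiplicity, are: (2n−1)α − 2 with multiplicity n − 2, together with the two values (αn + 2n − 4 ± √((α−2)²n² + 8αn − 12n − 8α + 12))/2. -/
open Finset Matrix Polynomial Real

/-- Distance matrix of a graph on `Fin n`: `(i,j)` entry is the graph distance. -/
noncomputable def distMatrix {n : ℕ} (G : SimpleGraph (Fin n)) : Matrix (Fin n) (Fin n) ℝ :=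
  fun i j => (G.dist i j : ℝ)

/-- Transmission of a vertex: sum of distances to all other vertices. -/
noncomputable def transmission {n : ℕ} (G : SimpleGraph (Fin n)) (i : Fin n) : ℝ :=
  ∑ j, (G.dist i j : ℝ)

/-- The α-distance matrix `D_α(G) = α·Tr(G) + (1-α)·D(G)`. -/
noncomputable def alphaDistMatrix {n : ℕ} (G : SimpleGraph (Fin n)) (α : ℝ) : Matrix (Fin n) (Fin n) ℝ :=
  α • Matrix.diagonal (transmission G) + (1 - α) • distMatrix G

/-- Wiener index `W(G) = (1/2)·∑_{i≠j} d(v_i,v_j)`. -/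
noncomputable def wiener {n : ℕ} (G : SimpleGraph (Fin n)) : ℝ :=
  (1 / 2) * ∑ i, ∑ j, (G.dist i j : ℝ)

/-- Frobenius norm of a real matrix. -/
noncomputable def frobNorm {n : ℕ} (M : Matrix (Fin n) (Fin n) ℝ) : ℝ :=
  Real.sqrt (∑ i, ∑ j, (M i j) ^ 2)

/-- The star on `n` vertices: vertex `0` is adjacent to every other vertex. -/
def starGraph (n : ℕ) : SimpleGraph (Fin n) where
  Adj i j := i ≠ j ∧ ((i : ℕ) = 0 ∨ (j : ℕ) = 0)
  symm := ⟨fun _ _ h => ⟨h.1.symm, h.2.symm⟩⟩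
  loopless := ⟨fun _ h => h.1 rfl⟩



section Aux
variable {m : Type*} [DecidableEq m] [Fintype m]

lemma my_charpoly_conj (P Q A : Matrix m m ℝ) (h1 : P * Q = 1) (h2 : Q * P = 1) :
    (P * A * Q).charpoly = A.charpoly := by
  have hc : charmatrix (P * A * Q) = (P.map C) * charmatrix A * (Q.map C) := by
    rw [charmatrix, charmatrix, Matrix.mul_sub, Matrix.sub_mul]
    congr 1
    · rw [scalar_apply, ← smul_one_eq_diagonal, Matrix.mul_smul, Matrix.smul_mul,
        Matrix.mul_one, ← Matrix.map_mul, h1, Matrix.map_one _ (map_zero C) (map_one C)]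
    · simp only [RingHom.mapMatrix_apply, ← Matrix.map_mul]
  rw [Matrix.charpoly, Matrix.charpoly, hc, det_mul, det_mul]
  have h3 : (P.map C).det * (Q.map C).det = 1 := by
    rw [← det_mul, ← Matrix.map_mul, h1, Matrix.map_one _ (map_zero C) (map_one C), det_one]
  calc (P.map C).det * (charmatrix A).det * (Q.map C).det
      = (P.map C).det * (Q.map C).det * (charmatrix A).det := by ring
    _ = (charmatrix A).det := by rw [h3, one_mul]

lemma my_charpoly_diagonal (d : m → ℝ) :
    (Matrix.diagonal d).charpoly = ∏ i, (X - C (d i)) := by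
  have h : charmatrix (Matrix.diagonal d) = Matrix.diagonal (fun i => X - C (d i)) := by
    ext i j
    by_cases h : i = j
    · subst h; simp [charmatrix_apply_eq]
    · simp [charmatrix_apply_ne _ _ _ h, Matrix.diagonal_apply_ne _ h]
  rw [Matrix.charpoly, h, det_diagonal]

lemma eig_roots {A : Matrix m m ℝ} (hA : A.IsHermitian) :
    A.charpoly.roots = Finset.univ.val.map hA.eigenvalues := by
  have hst := hA.spectral_theorem
  set U : Matrix m m ℝ := (hA.eigenvectorUnitary : Matrix m m ℝ) with hU
  have h1 : U * star U = 1 := Unitary.mul_star_self_of_mem hA.eigenvectorUnitary.prop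
  have h2 : star U * U = 1 := Unitary.star_mul_self_of_mem hA.eigenvectorUnitary.prop
  have hdiag : (RCLike.ofReal ∘ hA.eigenvalues : m → ℝ) = hA.eigenvalues := by
    funext i; simp [RCLike.ofReal]
  rw [hdiag] at hst
  have : A.charpoly = (Matrix.diagonal hA.eigenvalues).charpoly := by
    conv_lhs => rw [hst]
    exact my_charpoly_conj _ _ _ h1 h2
  rw [this, my_charpoly_diagonal, Finset.prod_eq_multiset_prod]
  have : Multiset.map (fun i => X - C (hA.eigenvalues i)) univ.val
      = Multiset.map (fun a => X - C a) (Multiset.map hA.eigenvalues univ.val) := by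
    rw [Multiset.map_map]; rfl
  rw [this, roots_multiset_prod_X_sub_C]
end Aux


section Star
variable {n : ℕ} (hn : 2 ≤ n)

lemma star_adj {i j : Fin n} (h : i ≠ j) (h0 : (i:ℕ) = 0 ∨ (j:ℕ) = 0) :
    (starGraph n).Adj i j := ⟨h, h0⟩

include hn in
lemma star_dist_one {i j : Fin n} (h : i ≠ j) (h0 : (i:ℕ) = 0 ∨ (j:ℕ) = 0) :
    (starGraph n).dist i j = 1 :=
  (SimpleGraph.dist_eq_one_iff_adj).mpr ⟨h, h0⟩

include hn in
lemma star_dist_two {i j : Fin n} (h : i ≠ j) (hi : (i:ℕ) ≠ 0) (hj : (j:ℕ) ≠ 0) :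
    (starGraph n).dist i j = 2 := by
  haveI : NeZero n := ⟨by omega⟩
  have h0i : (0 : Fin n) ≠ i := by
    intro he; exact hi (by rw [← he]; simp [Fin.val_zero])
  have h0j : (0 : Fin n) ≠ j := by
    intro he; exact hj (by rw [← he]; simp [Fin.val_zero])
  have hv0 : ((0 : Fin n) : ℕ) = 0 := by simp
  have a1 : (starGraph n).Adj i 0 := ⟨fun he => h0i he.symm, Or.inr hv0⟩
  have a2 : (starGraph n).Adj 0 j := ⟨h0j, Or.inl hv0⟩
  have hle : (starGraph n).dist i j ≤ 2 := by
    have := SimpleGraph.dist_le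
      (SimpleGraph.Walk.cons a1 (SimpleGraph.Walk.cons a2 SimpleGraph.Walk.nil))
    simpa using this
  have hne0 : (starGraph n).dist i j ≠ 0 := by
    intro h0
    rw [SimpleGraph.dist_eq_zero_iff_eq_or_not_reachable] at h0
    rcases h0 with h0 | h0
    · exact h h0
    · exact h0 ⟨SimpleGraph.Walk.cons a1 (SimpleGraph.Walk.cons a2 SimpleGraph.Walk.nil)⟩
  have hne1 : (starGraph n).dist i j ≠ 1 := by
    intro h1
    rw [SimpleGraph.dist_eq_one_iff_adj] at h1
    rcases h1.2 with h' | h'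
    · exact hi h'
    · exact hj h'
  omega
end Star
section Trans
variable {n : ℕ}

lemma star_transmission_zero (hn : 2 ≤ n) {i : Fin n} (hi : (i:ℕ) = 0) :
    transmission (starGraph n) i = (n : ℝ) - 1 := by
  unfold transmission
  have hval : ∀ j : Fin n, ((starGraph n).dist i j : ℝ) = 1 - (if j = i then 1 else 0) := by
    intro j
    by_cases h : j = i
    · subst h; simp [SimpleGraph.dist_self]
    · rw [star_dist_one hn (fun he => h he.symm) (Or.inl hi)]
      simp [h]
  rw [Finset.sum_congr rfl (fun j _ => hval j), Finset.sum_sub_distrib]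
  simp [Finset.sum_ite_eq']

lemma star_transmission_leaf (hn : 2 ≤ n) {i : Fin n} (hi : (i:ℕ) ≠ 0) :
    transmission (starGraph n) i = 2 * (n : ℝ) - 3 := by
  haveI : NeZero n := ⟨by omega⟩
  unfold transmission
  have hval : ∀ j : Fin n, ((starGraph n).dist i j : ℝ) =
      2 - (if j = i then 2 else 0) - (if j = 0 then 1 else 0) := by
    intro j
    by_cases h : j = i
    · have h00 : i ≠ 0 := fun he => hi (by simp [he])
      rw [h, SimpleGraph.dist_self]
      simp [h00]
    · by_cases h0 : j = 0
      · subst h0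
        rw [star_dist_one hn (fun he => h he.symm) (Or.inr (by simp))]
        have h0i : (0 : Fin n) ≠ i := fun he => hi (by simp [← he])
        simp [h0i]
        norm_num
      · have hj0 : (j : ℕ) ≠ 0 := fun he => h0 (Fin.ext (by simp [he]))
        rw [star_dist_two hn (fun he => h he.symm) hi hj0]
        simp [h, h0]
  rw [Finset.sum_congr rfl (fun j _ => hval j), Finset.sum_sub_distrib, Finset.sum_sub_distrib]
  simp [Finset.sum_ite_eq']
  ring

lemma star_alpha_apply (hn : 2 ≤ n) (α : ℝ) (i j : Fin n) :
    alphaDistMatrix (starGraph n) α i j =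
      if i = j then (if (i:ℕ) = 0 then α * ((n:ℝ) - 1) else α * (2*(n:ℝ) - 3))
      else (1 - α) * (if (i:ℕ) = 0 ∨ (j:ℕ) = 0 then 1 else 2) := by
  unfold alphaDistMatrix
  by_cases h : i = j
  · subst h
    by_cases h0 : (i:ℕ) = 0
    · simp [Matrix.diagonal_apply_eq, star_transmission_zero hn h0, SimpleGraph.dist_self, h0, distMatrix]
    · simp [Matrix.diagonal_apply_eq, star_transmission_leaf hn h0, SimpleGraph.dist_self, h0, distMatrix]
  · by_cases h0 : (i:ℕ) = 0 ∨ (j:ℕ) = 0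
    · rw [Matrix.add_apply, Matrix.smul_apply, Matrix.smul_apply,
        Matrix.diagonal_apply_ne _ h]
      simp only [distMatrix]
      rw [star_dist_one hn h h0]
      simp [h, h0]
    · push_neg at h0
      rw [Matrix.add_apply, Matrix.smul_apply, Matrix.smul_apply,
        Matrix.diagonal_apply_ne _ h]
      simp only [distMatrix]
      rw [star_dist_two hn h h0.1 h0.2]
      simp [h, h0.1, h0.2]
end Trans
section Blocks

/-- change-of-basis matrix -/
noncomputable def Pm (n : ℕ) : Matrix (Fin 2 ⊕ Fin (n-2)) (Fin 2 ⊕ Fin (n-2)) ℝ :=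
  fun x y => Sum.elim
    (fun k => if k = 0 then (if x = Sum.inl 0 then (1:ℝ) else 0)
              else (if x = Sum.inl 0 then 0 else 1))
    (fun j => (if x = Sum.inr j then (1:ℝ) else 0) - (if x = Sum.inl 1 then 1 else 0)) y

/-- inverse change-of-basis matrix -/
noncomputable def Qm (n : ℕ) : Matrix (Fin 2 ⊕ Fin (n-2)) (Fin 2 ⊕ Fin (n-2)) ℝ :=
  fun x y => Sum.elim
    (fun k => if k = 0 then (if y = Sum.inl 0 then (1:ℝ) else 0)
              else (if y = Sum.inl 0 then 0 else ((n:ℝ)-1)⁻¹))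
    (fun j => (if y = Sum.inr j then (1:ℝ) else 0) -
      (if y = Sum.inl 0 then 0 else ((n:ℝ)-1)⁻¹)) x

/-- block-diagonal form -/
noncomputable def Bm (n : ℕ) (α : ℝ) : Matrix (Fin 2 ⊕ Fin (n-2)) (Fin 2 ⊕ Fin (n-2)) ℝ :=
  Matrix.fromBlocks
    !![α*((n:ℝ)-1), (1-α)*((n:ℝ)-1); 1-α, α*(2*(n:ℝ)-3)+2*(1-α)*((n:ℝ)-2)]
    0 0 (Matrix.diagonal fun _ => (2*(n:ℝ)-1)*α-2)

lemma QP_eq_one {n : ℕ} (hn : 2 ≤ n) : Qm n * Pm n = 1 := by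
  have hne : (n:ℝ) - 1 ≠ 0 := by
    have : (2:ℝ) ≤ n := by exact_mod_cast hn
    nlinarith
  have hcard : ((n:ℕ) - 2 : ℕ) = n - 2 := rfl
  have hc : ((n - 2 : ℕ) : ℝ) = (n:ℝ) - 2 := by
    push_cast [Nat.cast_sub hn]; ring
  ext x y
  obtain k | j := x <;> [fin_cases k; skip] <;> obtain k' | j' := y <;>
    [fin_cases k'; skip; fin_cases k'; skip; fin_cases k'; skip] <;>
    simp [Matrix.mul_apply, Fintype.sum_sum_type, Fin.sum_univ_two, Pm, Qm,
      Matrix.one_apply, sub_mul, mul_sub, Finset.sum_sub_distrib,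
      Finset.sum_ite_eq, Finset.sum_ite_eq', Finset.sum_const, Finset.card_univ, hc]
  all_goals try exact if_congr eq_comm rfl rfl
  all_goals try ring
  all_goals have hne2 : (-1 + (n:ℝ)) ≠ 0 := by intro h; apply hne; linarith
  all_goals field_simp
  all_goals try ring
end Blocks
section APPB
variable {n : ℕ}

lemma fin_sum_ite {m : ℕ} (k : Fin m) (u v : ℝ) :
    ∑ j : Fin m, (if j = k then u else v) = u + ((m:ℝ) - 1) * v := by
  have h : ∀ j : Fin m, (if j = k then u else v) = v + (if j = k then u - v else 0) := by
    intro j; by_cases h : j = k <;> simp [h]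
  rw [Finset.sum_congr rfl (fun j _ => h j), Finset.sum_add_distrib, Finset.sum_const,
    Finset.sum_ite_eq' Finset.univ k (fun _ => u - v)]
  simp [Finset.card_univ]
  ring

lemma fin_sum_ite' {m : ℕ} (k : Fin m) (u v : ℝ) :
    ∑ j : Fin m, (if k = j then u else v) = u + ((m:ℝ) - 1) * v := by
  calc ∑ j : Fin m, (if k = j then u else v)
      = ∑ j : Fin m, (if j = k then u else v) :=
        Finset.sum_congr rfl (fun j _ => if_congr eq_comm rfl rfl)
    _ = u + ((m:ℝ) - 1) * v := fin_sum_ite k u v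

lemma e_val (h2n : 2 + (n-2) = n) (x : Fin 2 ⊕ Fin (n-2)) :
    (((finSumFinEquiv.trans (finCongr h2n)) x : Fin n) : ℕ)
      = Sum.elim (fun k : Fin 2 => (k:ℕ)) (fun j : Fin (n-2) => 2 + (j:ℕ)) x := by
  cases x <;> simp

lemma star_alpha_sum_apply (hn : 2 ≤ n) (h2n : 2 + (n-2) = n) (α : ℝ)
    (x y : Fin 2 ⊕ Fin (n-2)) :
    alphaDistMatrix (starGraph n) α ((finSumFinEquiv.trans (finCongr h2n)) x)
        ((finSumFinEquiv.trans (finCongr h2n)) y) =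
      if x = y then (if x = Sum.inl 0 then α*((n:ℝ)-1) else α*(2*(n:ℝ)-3))
      else (1-α) * (if x = Sum.inl 0 ∨ y = Sum.inl 0 then 1 else 2) := by
  set e := finSumFinEquiv.trans (finCongr h2n) with he
  rw [star_alpha_apply hn]
  have hxy : (e x = e y) = (x = y) := propext e.injective.eq_iff
  have h0 : ∀ z, (((e z : Fin n):ℕ) = 0) = (z = Sum.inl 0) := by
    intro z
    rw [e_val h2n]
    cases z with
    | inl k =>
      simp only [Sum.elim_inl, Sum.inl.injEq]
      refine propext ⟨fun h => Fin.ext (by simpa using h), fun h => by simp [h]⟩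
    | inr j => simp
  simp only [hxy, h0]

lemma AP_eq_PB (hn : 2 ≤ n) (h2n : 2 + (n-2) = n) (α : ℝ) :
    (Matrix.of fun x y => alphaDistMatrix (starGraph n) α
        ((finSumFinEquiv.trans (finCongr h2n)) x) ((finSumFinEquiv.trans (finCongr h2n)) y))
      * Pm n = Pm n * Bm n α := by
  have hc : ((n - 2 : ℕ) : ℝ) = (n:ℝ) - 2 := by push_cast [Nat.cast_sub hn]; ring
  ext x y
  rw [Matrix.mul_apply, Matrix.mul_apply, Fintype.sum_sum_type, Fintype.sum_sum_type,
    Fin.sum_univ_two, Fin.sum_univ_two]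
  simp only [Matrix.of_apply, star_alpha_sum_apply hn h2n α]
  obtain k | j := x <;> [fin_cases k; skip] <;> obtain k' | j' := y <;>
    [fin_cases k'; skip; fin_cases k'; skip; fin_cases k'; skip] <;>
    simp [Pm, Bm, Matrix.fromBlocks, Matrix.one_apply, sub_mul, mul_sub, ite_mul, mul_ite,
      Finset.sum_sub_distrib, Finset.sum_add_distrib,
      Finset.sum_ite_eq, Finset.sum_ite_eq', Finset.sum_const, Finset.card_univ, hc,
      Matrix.diagonal_apply, fin_sum_ite, fin_sum_ite']
  all_goals try ring
  all_goals split_ifs <;> ring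
end APPB
lemma my_charpoly_two (a b c d : ℝ) :
    (!![a,b;c,d]).charpoly = X^2 - C (a + d) * X + C (a*d - b*c) := by
  rw [Matrix.charpoly, Matrix.det_fin_two, charmatrix_apply_eq,
    charmatrix_apply_eq, charmatrix_apply_ne _ _ _ (by decide),
    charmatrix_apply_ne _ _ _ (by decide)]
  rw [show (!![a,b;c,d]) 0 0 = a from rfl, show (!![a,b;c,d]) 0 1 = b from rfl,
    show (!![a,b;c,d]) 1 0 = c from rfl, show (!![a,b;c,d]) 1 1 = d from rfl,
    map_add, map_sub, _root_.map_mul, _root_.map_mul]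
  ring

theorem stmt_1 {n : ℕ} (hn : 2 ≤ n) (α : ℝ) (hα : α ∈ Set.Icc (0 : ℝ) 1)
    (hA : (alphaDistMatrix (starGraph n) α).IsHermitian) :
    Finset.univ.val.map hA.eigenvalues =
      Multiset.replicate (n - 2) ((2 * (n : ℝ) - 1) * α - 2) +
        {(α * (n : ℝ) + 2 * n - 4 +
            Real.sqrt ((α - 2) ^ 2 * (n : ℝ) ^ 2 + 8 * α * n - 12 * n - 8 * α + 12)) / 2,
         (α * (n : ℝ) + 2 * n - 4 -
            Real.sqrt ((α - 2) ^ 2 * (n : ℝ) ^ 2 + 8 * α * n - 12 * n - 8 * α + 12)) / 2} := by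
  have h2n : 2 + (n - 2) = n := by omega
  have hn' : (2:ℝ) ≤ (n:ℝ) := by exact_mod_cast hn
  set A := alphaDistMatrix (starGraph n) α with hAdef
  set e : Fin 2 ⊕ Fin (n-2) ≃ Fin n := finSumFinEquiv.trans (finCongr h2n) with he
  have hQP := QP_eq_one hn
  have hPQ : Pm n * Qm n = 1 := mul_eq_one_comm.mpr hQP
  have hchar : A.charpoly = (Bm n α).charpoly := by
    have h1 : (Matrix.reindex e.symm e.symm A) = Pm n * Bm n α * Qm n := by
      have hA' : (Matrix.reindex e.symm e.symm A) = Matrix.of fun x y => A (e x) (e y) := by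
        ext x y
        rfl
      rw [hA']
      calc (Matrix.of fun x y => A (e x) (e y))
          = (Matrix.of fun x y => A (e x) (e y)) * (Pm n * Qm n) := by
            rw [hPQ, Matrix.mul_one]
        _ = ((Matrix.of fun x y => A (e x) (e y)) * Pm n) * Qm n := by
            rw [Matrix.mul_assoc]
        _ = Pm n * Bm n α * Qm n := by rw [AP_eq_PB hn h2n α]
    calc A.charpoly = (Matrix.reindex e.symm e.symm A).charpoly :=
          (Matrix.charpoly_reindex e.symm A).symm
      _ = (Pm n * Bm n α * Qm n).charpoly := by rw [h1]
      _ = (Bm n α).charpoly := my_charpoly_conj _ _ _ hPQ hQP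
  set r : ℝ := (2 * (n : ℝ) - 1) * α - 2 with hr
  set Δ : ℝ := (α - 2) ^ 2 * (n : ℝ) ^ 2 + 8 * α * n - 12 * n - 8 * α + 12 with hΔdef
  set s : ℝ := Real.sqrt Δ with hs
  set l1 : ℝ := (α * (n : ℝ) + 2 * n - 4 + s) / 2 with hl1
  set l2 : ℝ := (α * (n : ℝ) + 2 * n - 4 - s) / 2 with hl2
  have hΔ : 0 ≤ Δ := by
    rw [hΔdef]
    nlinarith [sq_nonneg (((n:ℝ) - 2) * (2 - α)), mul_nonneg (show (0:ℝ) ≤ (n:ℝ) - 1 by linarith)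
      (sq_nonneg (1 - α))]
  have hsq : s ^ 2 = Δ := Real.sq_sqrt hΔ
  have hBchar : (Bm n α).charpoly = (X - C l1) * (X - C l2) * (X - C r) ^ (n - 2) := by
    rw [Bm, Matrix.charpoly_fromBlocks_zero₁₂, my_charpoly_two, my_charpoly_diagonal]
    have htr : α * ((n:ℝ)-1) + (α * (2*(n:ℝ)-3) + 2*(1-α)*((n:ℝ)-2)) = l1 + l2 := by
      rw [hl1, hl2]; ring
    have hdet : α * ((n:ℝ)-1) * (α * (2*(n:ℝ)-3) + 2*(1-α)*((n:ℝ)-2))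
        - (1-α)*((n:ℝ)-1) * (1-α) = l1 * l2 := by
      have h4 : l1 * l2 = ((α * (n:ℝ) + 2 * n - 4) ^ 2 - s ^ 2) / 4 := by
        rw [hl1, hl2]; ring
      rw [h4, hsq, hΔdef]; ring
    rw [htr, hdet, Finset.prod_const, Finset.card_univ, Fintype.card_fin, map_add,
      _root_.map_mul]
    rw [hr]
    ring
  have hne1 : ((X - C l1) * (X - C l2) : ℝ[X]) ≠ 0 :=
    ((monic_X_sub_C l1).mul (monic_X_sub_C l2)).ne_zero
  have hne2 : ((X - C r) ^ (n-2) : ℝ[X]) ≠ 0 := ((monic_X_sub_C r).pow _).ne_zero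
  rw [← eig_roots hA]
  show A.charpoly.roots = _
  rw [hchar, hBchar, Polynomial.roots_mul (mul_ne_zero hne1 hne2),
    Polynomial.roots_mul (mul_ne_zero (X_sub_C_ne_zero l1) (X_sub_C_ne_zero l2)),
    Polynomial.roots_pow, roots_X_sub_C, roots_X_sub_C, roots_X_sub_C,
    Multiset.nsmul_singleton]
  have hpair : ({l1, l2} : Multiset ℝ) = {l1} + {l2} := by
    rw [Multiset.insert_eq_cons, ← Multiset.singleton_add]
  rw [hpair]
  abel
end

section
/- Let G be a simple undirected connected graph with n ≥ 2 vertices and let α ∈ [1/2, 1). Then the α-distance energy satisfies ς_α(G) ≥ 2(1−α)(n−1), with equality if and only if G is the complete graph K_n. -/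
open Finset Matrix Polynomial Real

section MyHelpers
variable {n : ℕ}

lemma my_trace_eq_sum (A : Matrix (Fin n) (Fin n) ℝ) (hA : A.IsHermitian) :
    A.trace = ∑ i, hA.eigenvalues i := by
  classical
  rw [hA.trace_eq_sum_eigenvalues]
  simp

lemma my_dot_eq (A : Matrix (Fin n) (Fin n) ℝ) (hA : A.IsHermitian) (x : Fin n → ℝ) :
    x ⬝ᵥ (A *ᵥ x) =
      ∑ i, hA.eigenvalues i *
        ((star (hA.eigenvectorUnitary : Matrix (Fin n) (Fin n) ℝ) *ᵥ x) i)^2 := by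
  set U : Matrix (Fin n) (Fin n) ℝ := (hA.eigenvectorUnitary : Matrix (Fin n) (Fin n) ℝ) with hU
  set y : Fin n → ℝ := star U *ᵥ x with hy
  have h1 : A *ᵥ x = U *ᵥ ((Matrix.diagonal hA.eigenvalues) *ᵥ y) := by
    conv_lhs => rw [hA.spectral_theorem]
    simp [← Matrix.mulVec_mulVec, hy, hU]
  rw [h1, Matrix.dotProduct_mulVec]
  have h2 : x ᵥ* U = y := by
    rw [hy, Matrix.star_eq_conjTranspose]
    ext i
    simp [Matrix.vecMul, Matrix.mulVec, dotProduct, Matrix.conjTranspose_apply, mul_comm]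
  rw [h2]
  simp only [dotProduct, Matrix.mulVec_diagonal]
  exact Finset.sum_congr rfl fun i _ => by ring


lemma my_norm_eq (A : Matrix (Fin n) (Fin n) ℝ) (hA : A.IsHermitian) (x : Fin n → ℝ) :
    ∑ i, ((star (hA.eigenvectorUnitary : Matrix (Fin n) (Fin n) ℝ) *ᵥ x) i)^2 = x ⬝ᵥ x := by
  set U : Matrix (Fin n) (Fin n) ℝ := (hA.eigenvectorUnitary : Matrix (Fin n) (Fin n) ℝ) with hU
  have h1 : U * star U = 1 := Unitary.coe_mul_star_self _
  have h2 : x ᵥ* U = star U *ᵥ x := by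
    rw [Matrix.star_eq_conjTranspose]
    ext i
    simp [Matrix.vecMul, Matrix.mulVec, dotProduct, Matrix.conjTranspose_apply, mul_comm]
  calc ∑ i, ((star U *ᵥ x) i)^2 = (star U *ᵥ x) ⬝ᵥ (star U *ᵥ x) := by
        simp [dotProduct, pow_two]
    _ = (x ᵥ* U) ⬝ᵥ (star U *ᵥ x) := by rw [h2]
    _ = x ⬝ᵥ (U *ᵥ (star U *ᵥ x)) := (Matrix.dotProduct_mulVec x U _).symm
    _ = x ⬝ᵥ x := by rw [Matrix.mulVec_mulVec, h1, Matrix.one_mulVec]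


lemma my_sum_abs_two_values (hn : 2 ≤ n) {f : Fin n → ℝ} {a b : ℝ} (ha : 0 < a) (hb : 0 < b)
    (hab : a = ((n : ℝ) - 1) * b) (hvals : ∀ i, f i = a ∨ f i = -b)
    (hsum : ∑ i, f i = 0) :
    ∑ i, |f i| = 2 * a := by
  classical
  set s : Finset (Fin n) := Finset.univ.filter (fun i => f i = a) with hs
  set t : Finset (Fin n) := Finset.univ.filter (fun i => ¬ f i = a) with ht
  have hfs : ∀ i ∈ s, f i = a := fun i hi => (Finset.mem_filter.mp hi).2
  have hft : ∀ i ∈ t, f i = -b := by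
    intro i hi
    rcases hvals i with h | h
    · exact absurd h (Finset.mem_filter.mp hi).2
    · exact h
  have hcard : s.card + t.card = n := by
    rw [hs, ht, Finset.card_filter_add_card_filter_not]
    simp
  have es : ∑ i ∈ s, f i = s.card • a := Finset.sum_eq_card_nsmul hfs
  have et : ∑ i ∈ t, f i = t.card • (-b) := Finset.sum_eq_card_nsmul hft
  have es' : ∑ i ∈ s, |f i| = s.card • a :=
    Finset.sum_eq_card_nsmul (fun i hi => by rw [hfs i hi, abs_of_pos ha])
  have et' : ∑ i ∈ t, |f i| = t.card • b :=
    Finset.sum_eq_card_nsmul (fun i hi => by rw [hft i hi, abs_neg, abs_of_pos hb])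
  have hsum2 : (s.card : ℝ) * a + (t.card : ℝ) * (-b) = 0 := by
    rw [← nsmul_eq_mul, ← nsmul_eq_mul, ← es, ← et, hs, ht,
      Finset.sum_filter_add_sum_filter_not]
    exact hsum
  have habs2 : ∑ i, |f i| = (s.card : ℝ) * a + (t.card : ℝ) * b := by
    rw [← Finset.sum_filter_add_sum_filter_not Finset.univ (fun i => f i = a) (fun i => |f i|),
      ← hs, ← ht, es', et', nsmul_eq_mul, nsmul_eq_mul]
  have hcardR : (s.card : ℝ) + (t.card : ℝ) = (n : ℝ) := by exact_mod_cast hcard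
  have hnR : (2 : ℝ) ≤ (n : ℝ) := by exact_mod_cast hn
  have hk : (s.card : ℝ) = 1 := by
    have h1 : (s.card : ℝ) * (((n:ℝ) - 1) * b) + ((n:ℝ) - (s.card:ℝ)) * (-b) = 0 := by
      rw [← hab]
      have : (t.card : ℝ) = (n : ℝ) - (s.card : ℝ) := by linarith
      rw [← this]; nlinarith [hsum2]
    have h2 : b * ((s.card : ℝ) - 1) * (n : ℝ) = 0 := by ring_nf; ring_nf at h1; linarith
    rcases mul_eq_zero.mp h2 with h | h
    · rcases mul_eq_zero.mp h with h' | h'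
      · linarith
      · linarith
    · linarith
  have htR : (t.card : ℝ) = (n : ℝ) - 1 := by linarith
  rw [habs2, hk, htR, hab]
  ring


lemma my_ite_row_sum (i : Fin n) :
    ∑ j, (if i = j then (0:ℝ) else 1) = (n : ℝ) - 1 := by
  classical
  have : ∑ j, (if i = j then (0:ℝ) else 1) = ∑ j : Fin n, (1 - if i = j then (1:ℝ) else 0) := by
    apply Finset.sum_congr rfl; intro j _; by_cases h : i = j <;> simp [h]
  rw [this, Finset.sum_sub_distrib]
  simp

lemma my_ones_quad (M : Matrix (Fin n) (Fin n) ℝ) :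
    (fun _ => (1:ℝ)) ⬝ᵥ (M *ᵥ fun _ => 1) = ∑ i, ∑ j, M i j := by
  simp [dotProduct, Matrix.mulVec]

lemma my_trace_alpha (G : SimpleGraph (Fin n)) (α : ℝ) :
    (alphaDistMatrix G α).trace = 2 * α * wiener G := by
  rw [Matrix.trace]
  have h : ∀ i, (alphaDistMatrix G α).diag i = α * transmission G i := by
    intro i
    simp [alphaDistMatrix, Matrix.diag, distMatrix, SimpleGraph.dist_self]
  rw [Finset.sum_congr rfl (fun i _ => h i), ← Finset.mul_sum]
  simp only [wiener, transmission]
  ring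

lemma my_entries_sum (G : SimpleGraph (Fin n)) (α : ℝ) :
    ∑ i, ∑ j, alphaDistMatrix G α i j = 2 * wiener G := by
  classical
  have h : ∀ i, ∑ j, alphaDistMatrix G α i j
      = α * transmission G i + (1 - α) * ∑ j, (G.dist i j : ℝ) := by
    intro i
    simp only [alphaDistMatrix, Matrix.add_apply, Matrix.smul_apply, smul_eq_mul]
    rw [Finset.sum_add_distrib, ← Finset.mul_sum, ← Finset.mul_sum]
    have hd : ∑ j, Matrix.diagonal (transmission G) i j = transmission G i := by
      simp [Matrix.diagonal_apply]
    rw [hd]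
    rfl
  rw [Finset.sum_congr rfl (fun i _ => h i), Finset.sum_add_distrib, ← Finset.mul_sum,
    ← Finset.mul_sum]
  simp only [wiener, transmission]
  ring

lemma my_energy_ge (f : Fin n → ℝ) (m : Fin n) (hsum : ∑ i, f i = 0) :
    2 * f m ≤ ∑ i, |f i| := by
  classical
  have h1 : ∑ i ∈ Finset.univ.erase m, f i = - f m := by
    have := Finset.sum_erase_add Finset.univ f (Finset.mem_univ m)
    linarith [hsum, this]
  have h2 : |f m| ≤ ∑ i ∈ Finset.univ.erase m, |f i| := by
    calc |f m| = |∑ i ∈ Finset.univ.erase m, f i| := by rw [h1, abs_neg]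
      _ ≤ ∑ i ∈ Finset.univ.erase m, |f i| := Finset.abs_sum_le_sum_abs _ _
  have h3 : (∑ i ∈ Finset.univ.erase m, |f i|) + |f m| = ∑ i, |f i| :=
    Finset.sum_erase_add Finset.univ _ (Finset.mem_univ m)
  have h4 : f m ≤ |f m| := le_abs_self _
  linarith

lemma my_dist_bound (G : SimpleGraph (Fin n)) (hG : G.Connected) (i j : Fin n) :
    (if i = j then (0:ℝ) else 1) ≤ (G.dist i j : ℝ) := by
  by_cases h : i = j
  · simp [h]
  · rw [if_neg h]
    have := hG.pos_dist_of_ne h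
    exact_mod_cast this

lemma my_dist_top {i j : Fin n} :
    ((⊤ : SimpleGraph (Fin n)).dist i j : ℝ) = if i = j then 0 else 1 := by
  by_cases h : i = j
  · simp [h]
  · rw [if_neg h]
    have : (⊤ : SimpleGraph (Fin n)).dist i j = 1 :=
      SimpleGraph.dist_eq_one_iff_adj.mpr ((SimpleGraph.top_adj i j).mpr h)
    rw [this]; norm_num

lemma my_transmission_top (i : Fin n) :
    transmission (⊤ : SimpleGraph (Fin n)) i = (n : ℝ) - 1 := by
  simp only [transmission, my_dist_top]
  exact my_ite_row_sum i

lemma my_wiener_top : wiener (⊤ : SimpleGraph (Fin n)) = (n : ℝ) * ((n : ℝ) - 1) / 2 := by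
  simp only [wiener, my_dist_top]
  rw [Finset.sum_congr rfl (fun i _ => my_ite_row_sum i), Finset.sum_const]
  simp
  ring

lemma my_top_apply (α : ℝ) (i j : Fin n) :
    alphaDistMatrix (⊤ : SimpleGraph (Fin n)) α i j
      = if i = j then α * ((n:ℝ) - 1) else (1 - α) := by
  simp only [alphaDistMatrix, Matrix.add_apply, Matrix.smul_apply, smul_eq_mul, distMatrix,
    my_dist_top, Matrix.diagonal_apply, my_transmission_top]
  by_cases h : i = j <;> simp [h]

lemma my_top_quadratic (α : ℝ) :
    (alphaDistMatrix (⊤ : SimpleGraph (Fin n)) α - ((n:ℝ) - 1) • (1 : Matrix (Fin n) (Fin n) ℝ))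
      * (alphaDistMatrix (⊤ : SimpleGraph (Fin n)) α
          - (α * ((n:ℝ) - 1) - (1 - α)) • (1 : Matrix (Fin n) (Fin n) ℝ)) = 0 := by
  classical
  have hP : ∀ i k, (alphaDistMatrix (⊤ : SimpleGraph (Fin n)) α
      - ((n:ℝ) - 1) • (1 : Matrix (Fin n) (Fin n) ℝ)) i k
      = (1 - α) - (if i = k then (1 - α) * n else 0) := by
    intro i k
    simp only [Matrix.sub_apply, Matrix.smul_apply, Matrix.one_apply, my_top_apply, smul_eq_mul]
    by_cases h : i = k <;> simp [h] <;> ring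
  have hQ : ∀ k j, (alphaDistMatrix (⊤ : SimpleGraph (Fin n)) α
      - (α * ((n:ℝ) - 1) - (1 - α)) • (1 : Matrix (Fin n) (Fin n) ℝ)) k j = (1 - α) := by
    intro k j
    simp only [Matrix.sub_apply, Matrix.smul_apply, Matrix.one_apply, my_top_apply, smul_eq_mul]
    by_cases h : k = j <;> simp [h] <;> ring
  ext i j
  rw [Matrix.mul_apply]
  simp only [Matrix.zero_apply]
  rw [Finset.sum_congr rfl (fun k _ => by rw [hP i k, hQ k j])]
  rw [Finset.sum_congr rfl (fun k _ => sub_mul ((1:ℝ) - α) _ _), Finset.sum_sub_distrib]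
  simp [Finset.sum_ite_eq, Finset.mul_sum]
  ring

lemma my_eigen_dichotomy (α : ℝ)
    (hA : (alphaDistMatrix (⊤ : SimpleGraph (Fin n)) α).IsHermitian) (i : Fin n) :
    hA.eigenvalues i = (n:ℝ) - 1 ∨ hA.eigenvalues i = α * ((n:ℝ) - 1) - (1 - α) := by
  classical
  set A := alphaDistMatrix (⊤ : SimpleGraph (Fin n)) α with hAdef
  set σ : ℝ := hA.eigenvalues i with hσ
  set v : Fin n → ℝ := ⇑(hA.eigenvectorBasis i) with hv
  have hmv : A *ᵥ v = σ • v := hA.mulVec_eigenvectorBasis i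
  have hvne : v ≠ 0 := by
    intro h
    apply hA.eigenvectorBasis.orthonormal.ne_zero i
    ext k
    exact congrFun h k
  have h1 : ∀ y : ℝ, (A - y • (1 : Matrix (Fin n) (Fin n) ℝ)) *ᵥ v = (σ - y) • v := by
    intro y
    rw [Matrix.sub_mulVec, hmv, Matrix.smul_mulVec, Matrix.one_mulVec, sub_smul]
  have h2 : ((A - ((n:ℝ) - 1) • (1 : Matrix (Fin n) (Fin n) ℝ))
      * (A - (α * ((n:ℝ) - 1) - (1 - α)) • (1 : Matrix (Fin n) (Fin n) ℝ))) *ᵥ v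
      = ((σ - ((n:ℝ) - 1)) * (σ - (α * ((n:ℝ) - 1) - (1 - α)))) • v := by
    rw [← Matrix.mulVec_mulVec, h1, Matrix.mulVec_smul, h1, smul_smul, mul_comm]
  rw [my_top_quadratic α, Matrix.zero_mulVec] at h2
  have h3 := (smul_eq_zero.mp h2.symm).resolve_right hvne
  rcases mul_eq_zero.mp h3 with h | h
  · left; linarith [sub_eq_zero.mp h]
  · right; linarith [sub_eq_zero.mp h]

lemma my_top_energy (hn : 2 ≤ n) (α : ℝ) (hα1 : α < 1)
    (hA : (alphaDistMatrix (⊤ : SimpleGraph (Fin n)) α).IsHermitian) :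
    ∑ i, |hA.eigenvalues i - 2 * α * wiener (⊤ : SimpleGraph (Fin n)) / n|
      = 2 * (1 - α) * ((n : ℝ) - 1) := by
  classical
  have hnR : (2:ℝ) ≤ (n:ℝ) := by exact_mod_cast hn
  have hn0 : (n:ℝ) ≠ 0 := by linarith
  have hc : 2 * α * wiener (⊤ : SimpleGraph (Fin n)) / n = α * ((n:ℝ) - 1) := by
    rw [my_wiener_top]; field_simp
  have hα1' : (0:ℝ) < 1 - α := by linarith
  set f : Fin n → ℝ := fun i => hA.eigenvalues i - α * ((n:ℝ) - 1) with hf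
  have hvals : ∀ i, f i = (1 - α) * ((n:ℝ) - 1) ∨ f i = -(1 - α) := by
    intro i
    rcases my_eigen_dichotomy α hA i with h | h
    · left; rw [hf]; simp only; rw [h]; ring
    · right; rw [hf]; simp only; rw [h]; ring
  have hsum : ∑ i, f i = 0 := by
    rw [hf]
    rw [Finset.sum_sub_distrib, ← my_trace_eq_sum _ hA, my_trace_alpha, my_wiener_top,
      Finset.sum_const, Finset.card_univ, Fintype.card_fin, nsmul_eq_mul]
    field_simp
    ring
  have := my_sum_abs_two_values hn (mul_pos hα1' (by linarith)) hα1'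
    (by ring : (1 - α) * ((n:ℝ) - 1) = ((n:ℝ) - 1) * (1 - α)) hvals hsum
  calc ∑ i, |hA.eigenvalues i - 2 * α * wiener (⊤ : SimpleGraph (Fin n)) / n|
      = ∑ i, |f i| := by
        apply Finset.sum_congr rfl
        intro i _
        rw [hc]
    _ = 2 * ((1 - α) * ((n:ℝ) - 1)) := this
    _ = 2 * (1 - α) * ((n:ℝ) - 1) := by ring


lemma my_lower (hn : 2 ≤ n) (G : SimpleGraph (Fin n)) (hG : G.Connected)
    (α : ℝ) (hα2 : 0 ≤ α) (hα1 : α < 1)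
    (hA : (alphaDistMatrix G α).IsHermitian) :
    2 * (1 - α) * ((n : ℝ) - 1) ≤ ∑ i, |hA.eigenvalues i - 2 * α * wiener G / n| ∧
      (G ≠ ⊤ → 2 * (1 - α) * ((n : ℝ) - 1) < ∑ i, |hA.eigenvalues i - 2 * α * wiener G / n|) := by
  classical
  have hnR : (2:ℝ) ≤ (n:ℝ) := by exact_mod_cast hn
  have hn0 : (0:ℝ) < (n:ℝ) := by linarith
  have : Nonempty (Fin n) := ⟨⟨0, by omega⟩⟩
  set c : ℝ := 2 * α * wiener G / n with hc
  have hnc : (n:ℝ) * c = 2 * α * wiener G := by rw [hc]; field_simp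
  set σ : Fin n → ℝ := hA.eigenvalues with hσ
  set f : Fin n → ℝ := fun i => σ i - c with hf
  have hsumf : ∑ i, f i = 0 := by
    rw [hf]
    rw [Finset.sum_sub_distrib, ← my_trace_eq_sum _ hA, my_trace_alpha, Finset.sum_const,
      Finset.card_univ, Fintype.card_fin, nsmul_eq_mul, hnc]
    ring
  obtain ⟨m, hm⟩ := Finite.exists_max σ
  have hEn : 2 * f m ≤ ∑ i, |f i| := my_energy_ge f m hsumf
  -- Rayleigh bound
  have hquad : (fun _ => (1:ℝ)) ⬝ᵥ (alphaDistMatrix G α *ᵥ fun _ => 1) = 2 * wiener G := by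
    rw [my_ones_quad, my_entries_sum]
  have hray : 2 * wiener G ≤ σ m * n := by
    rw [← hquad, my_dot_eq _ hA]
    set y : Fin n → ℝ :=
      star (hA.eigenvectorUnitary : Matrix (Fin n) (Fin n) ℝ) *ᵥ (fun _ => 1) with hy
    have h3 : ∑ i, (y i)^2 = (n:ℝ) := by
      rw [hy, my_norm_eq _ hA]
      simp [dotProduct]
    calc ∑ i, σ i * (y i)^2 ≤ ∑ i, σ m * (y i)^2 :=
          Finset.sum_le_sum (fun i _ => mul_le_mul_of_nonneg_right (hm i) (sq_nonneg _))
      _ = σ m * (n:ℝ) := by rw [← Finset.mul_sum, h3]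
  -- Wiener lower bound
  have hWlow : (n:ℝ) * ((n:ℝ) - 1) ≤ 2 * wiener G := by
    have h1 : ∑ i : Fin n, ∑ j, (if i = j then (0:ℝ) else 1) ≤ ∑ i : Fin n, ∑ j, (G.dist i j : ℝ) :=
      Finset.sum_le_sum (fun i _ => Finset.sum_le_sum (fun j _ => my_dist_bound G hG i j))
    rw [Finset.sum_congr rfl (fun i _ => my_ite_row_sum i), Finset.sum_const, Finset.card_univ,
      Fintype.card_fin, nsmul_eq_mul] at h1
    rw [wiener]
    linarith
  constructor
  · calc 2 * (1 - α) * ((n:ℝ) - 1) ≤ 2 * f m := by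
          rw [hf]; simp only
          have h1α : (0:ℝ) ≤ 1 - α := by linarith
          have hkey : ((n:ℝ)) * ((1-α)*((n:ℝ)-1)) ≤ (n:ℝ) * (σ m - c) := by
            nlinarith [hray, hWlow, hnc, mul_le_mul_of_nonneg_left hWlow h1α]
          have := (mul_le_mul_iff_right₀ hn0).mp hkey
          linarith
      _ ≤ ∑ i, |f i| := hEn
  · intro hGtop
    -- strict Wiener bound
    obtain ⟨i0, j0, hij, hnadj⟩ : ∃ i0 j0 : Fin n, i0 ≠ j0 ∧ ¬ G.Adj i0 j0 := by
      by_contra h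
      push_neg at h
      apply hGtop
      ext i j
      simp only [SimpleGraph.top_adj]
      constructor
      · exact fun h' => h'.ne
      · exact fun h' => h i j h'
    have hd2 : (2:ℝ) ≤ (G.dist i0 j0 : ℝ) := by
      have h0 : G.dist i0 j0 ≠ 0 := Nat.pos_iff_ne_zero.mp (hG.pos_dist_of_ne hij)
      have h1 : G.dist i0 j0 ≠ 1 := fun h => hnadj (SimpleGraph.dist_eq_one_iff_adj.mp h)
      have : 2 ≤ G.dist i0 j0 := by omega
      exact_mod_cast this
    have hWstrict : (n:ℝ) * ((n:ℝ) - 1) < 2 * wiener G := by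
      have h1 : ∑ i : Fin n, ∑ j, (if i = j then (0:ℝ) else 1)
          < ∑ i : Fin n, ∑ j, (G.dist i j : ℝ) := by
        apply Finset.sum_lt_sum
        · exact fun i _ => Finset.sum_le_sum (fun j _ => my_dist_bound G hG i j)
        · refine ⟨i0, Finset.mem_univ i0, ?_⟩
          apply Finset.sum_lt_sum
          · exact fun j _ => my_dist_bound G hG i0 j
          · refine ⟨j0, Finset.mem_univ j0, ?_⟩
            rw [if_neg hij]
            linarith
      rw [Finset.sum_congr rfl (fun i _ => my_ite_row_sum i), Finset.sum_const, Finset.card_univ,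
        Fintype.card_fin, nsmul_eq_mul] at h1
      rw [wiener]
      linarith
    calc 2 * (1 - α) * ((n:ℝ) - 1) < 2 * f m := by
          rw [hf]; simp only
          have h1α : (0:ℝ) < 1 - α := by linarith
          have hkey : ((n:ℝ)) * ((1-α)*((n:ℝ)-1)) < (n:ℝ) * (σ m - c) := by
            nlinarith [hray, hWstrict, hnc, mul_lt_mul_of_pos_left hWstrict h1α]
          have := (mul_lt_mul_iff_right₀ hn0).mp hkey
          linarith
      _ ≤ ∑ i, |f i| := hEn

end MyHelpers

theorem stmt_2 {n : ℕ} (hn : 2 ≤ n) (G : SimpleGraph (Fin n)) (hG : G.Connected)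
    (α : ℝ) (hα : α ∈ Set.Ico (1 / 2 : ℝ) 1)
    (hA : (alphaDistMatrix G α).IsHermitian) :
    2 * (1 - α) * ((n : ℝ) - 1) ≤ ∑ i, |hA.eigenvalues i - 2 * α * wiener G / n| ∧
      ((∑ i, |hA.eigenvalues i - 2 * α * wiener G / n|) = 2 * (1 - α) * ((n : ℝ) - 1) ↔
        G = ⊤) := by
  obtain ⟨hα2, hα1⟩ := hα
  have hα0 : (0:ℝ) ≤ α := by linarith
  have hlow := my_lower hn G hG α hα0 hα1 hA
  refine ⟨hlow.1, ?_, ?_⟩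
  · intro heq
    by_contra hne
    exact absurd heq (ne_of_gt (hlow.2 hne))
  · intro h
    subst h
    exact my_top_energy hn α hα1 hA
end

section
/- Let S_n be the star on n ≥ 2 vertices and α ∈ [0,1]. Then the α-distance energy of S_n equals [α(−3n²+8n−4) + 2n² − 4n + n√((α−2)²n² + 8αn − 12n − 8α + 12)]/(2n) + |[α(−3n²+8n−4) + 2n² − 4n − n√((α−2)²n² + 8αn − 12n − 8α + 12)]/(2n)| + |3α − 2 − 2α/n|·(n−2). -/
open Finset Matrix Polynomial Real

lemma star_dist {n : ℕ} (hn : 2 ≤ n) (i j : Fin n) :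
    (starGraph n).dist i j =
      if i = j then 0 else if (i : ℕ) = 0 ∨ (j : ℕ) = 0 then 1 else 2 := by
  rcases eq_or_ne i j with h | h
  · simp [h]
  rw [if_neg h]
  by_cases h0 : (i : ℕ) = 0 ∨ (j : ℕ) = 0
  · rw [if_pos h0]
    exact (SimpleGraph.dist_eq_one_iff_adj).2 ⟨h, h0⟩
  · rw [if_neg h0]
    push_neg at h0
    obtain ⟨hi0, hj0⟩ := h0
    have hzlt : 0 < n := by omega
    set z : Fin n := ⟨0, hzlt⟩ with hz
    have hiz : i ≠ z := by
      intro hh; apply hi0; rw [hh]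
    have hjz : z ≠ j := by
      intro hh; apply hj0; rw [← hh]
    have haiz : (starGraph n).Adj i z := ⟨hiz, Or.inr rfl⟩
    have hazj : (starGraph n).Adj z j := ⟨hjz, Or.inl rfl⟩
    have hle : (starGraph n).dist i j ≤ 2 := by
      have := SimpleGraph.dist_le
        (SimpleGraph.Walk.cons haiz (SimpleGraph.Walk.cons hazj SimpleGraph.Walk.nil))
      simpa using this
    have hpos : 0 < (starGraph n).dist i j :=
      SimpleGraph.Reachable.pos_dist_of_ne
        ⟨SimpleGraph.Walk.cons haiz (SimpleGraph.Walk.cons hazj SimpleGraph.Walk.nil)⟩ h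
    have hne1 : (starGraph n).dist i j ≠ 1 := by
      intro hh
      have := (SimpleGraph.dist_eq_one_iff_adj).1 hh
      exact (not_or.2 ⟨hi0, hj0⟩) this.2
    omega

lemma star_dist_real {n : ℕ} (hn : 2 ≤ n) (i j : Fin n) :
    ((starGraph n).dist i j : ℝ) =
      if i = j then 0 else if (i : ℕ) = 0 ∨ (j : ℕ) = 0 then 1 else 2 := by
  rw [star_dist hn]
  split_ifs <;> norm_num

lemma star_trans_zero {n : ℕ} (hn : 2 ≤ n) (i : Fin n) (hi : (i : ℕ) = 0) :
    transmission (starGraph n) i = n - 1 := by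
  unfold transmission
  have : ∀ j : Fin n, ((starGraph n).dist i j : ℝ) = 1 - (if i = j then 1 else 0) := by
    intro j
    rw [star_dist_real hn]
    rcases eq_or_ne i j with h | h
    · simp [h]
    · simp [h, hi]
  rw [Finset.sum_congr rfl fun j _ => this j, Finset.sum_sub_distrib]
  simp [Finset.sum_ite_eq, Finset.card_univ]

lemma star_trans_ne {n : ℕ} (hn : 2 ≤ n) (i : Fin n) (hi : (i : ℕ) ≠ 0) :
    transmission (starGraph n) i = 2 * n - 3 := by
  unfold transmission
  have hzlt : 0 < n := by omega
  have : ∀ j : Fin n, ((starGraph n).dist i j : ℝ) =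
      2 - (if i = j then 2 else 0) - (if (⟨0, hzlt⟩ : Fin n) = j then 1 else 0) := by
    intro j
    rw [star_dist_real hn]
    rcases eq_or_ne i j with h | h
    · have : ¬ ((⟨0, hzlt⟩ : Fin n) = j) := by
        intro hh; apply hi; rw [h, ← hh]
      simp [h, this]
    · rcases eq_or_ne ((j : ℕ)) 0 with hj | hj
      · have hzj : (⟨0, hzlt⟩ : Fin n) = j := by
          apply Fin.ext; simp [hj]
        simp [h, hi, hj, hzj]; norm_num
      · have hzj : ¬ ((⟨0, hzlt⟩ : Fin n) = j) := by
          intro hh; apply hj; rw [← hh]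
        simp [h, hi, hj, hzj]
  rw [Finset.sum_congr rfl fun j _ => this j]
  rw [Finset.sum_sub_distrib, Finset.sum_sub_distrib]
  simp [Finset.sum_ite_eq, Finset.card_univ]
  ring

noncomputable def starC (n : ℕ) : Matrix (Fin n) (Fin 2) ℝ :=
  fun i k => if k = 0 then 1 else if (i : ℕ) = 0 then 1 else 0

noncomputable def starR (n : ℕ) (α : ℝ) : Matrix (Fin 2) (Fin n) ℝ :=
  fun k j => if k = 0 then (if (j : ℕ) = 0 then 1 - α else 2 * (1 - α))
    else (if (j : ℕ) = 0 then 1 + α - α * n else α - 1)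

lemma star_decomp {n : ℕ} (hn : 2 ≤ n) (α : ℝ) :
    alphaDistMatrix (starGraph n) α =
      (α * (2 * (n : ℝ) - 1) - 2) • (1 : Matrix (Fin n) (Fin n) ℝ) + starC n * starR n α := by
  ext i j
  simp only [alphaDistMatrix, Matrix.add_apply, Matrix.smul_apply, Matrix.diagonal_apply,
    distMatrix, smul_eq_mul, Matrix.mul_apply, Fin.sum_univ_two, Matrix.one_apply,
    starC, starR, star_dist_real hn]
  rcases eq_or_ne i j with h | h
  · subst h
    rcases eq_or_ne ((i : ℕ)) 0 with hi | hi
    · rw [star_trans_zero hn i hi]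
      simp [hi]
      ring
    · rw [star_trans_ne hn i hi]
      simp [hi]
      ring
  · rcases eq_or_ne ((i : ℕ)) 0 with hi | hi
    · have hj : (j : ℕ) ≠ 0 := fun hh => h (Fin.ext (by rw [hi, hh]))
      simp [h, hi, hj]
      try ring
    · rcases eq_or_ne ((j : ℕ)) 0 with hj | hj
      · simp [h, hi, hj]
        try ring
      · simp [h, hi, hj]
        try ring

lemma det_smul_one_sub_eq {n : ℕ} {A : Matrix (Fin n) (Fin n) ℝ} (hA : A.IsHermitian) (x : ℝ) :
    (x • (1 : Matrix (Fin n) (Fin n) ℝ) - A).det = ∏ i, (x - hA.eigenvalues i) := by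
  have hd := hA.conjStarAlgAut_star_eigenvectorUnitary
  rw [Unitary.conjStarAlgAut_star_apply] at hd
  rw [RCLike.ofReal_real_eq_id] at hd
  set U : Matrix (Fin n) (Fin n) ℝ :=
    (Matrix.IsHermitian.eigenvectorUnitary hA : Matrix (Fin n) (Fin n) ℝ) with hUdef
  have hsU : star U * U = 1 := Unitary.coe_star_mul_self _
  have key : star U * (x • (1 : Matrix (Fin n) (Fin n) ℝ) - A) * U =
      x • (1 : Matrix (Fin n) (Fin n) ℝ) - Matrix.diagonal hA.eigenvalues := by
    rw [Matrix.mul_sub, Matrix.sub_mul, hd]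
    congr 1
    rw [Matrix.mul_smul, Matrix.mul_one, Matrix.smul_mul, hsU]
  have hdet : (star U * (x • (1 : Matrix (Fin n) (Fin n) ℝ) - A) * U).det =
      (x • (1 : Matrix (Fin n) (Fin n) ℝ) - A).det := by
    rw [Matrix.det_mul, Matrix.det_mul, mul_comm, ← mul_assoc, ← Matrix.det_mul,
      mul_eq_one_comm.mp hsU]
    simp
  rw [key] at hdet
  rw [← hdet, Matrix.smul_one_eq_diagonal, Matrix.diagonal_sub, Matrix.det_diagonal]

lemma sum_ite_zero' {n : ℕ} (hn : 0 < n) (a b : ℝ) :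
    ∑ j : Fin n, (if (j : ℕ) = 0 then a else b) = a + b * ((n : ℝ) - 1) := by
  have h : ∀ j : Fin n, (if (j : ℕ) = 0 then a else b) =
      b + (if (⟨0, hn⟩ : Fin n) = j then a - b else 0) := by
    intro j
    rcases eq_or_ne ((j : ℕ)) 0 with hj | hj
    · have : (⟨0, hn⟩ : Fin n) = j := Fin.ext (by simp [hj])
      simp [hj, this]
    · have : ¬ ((⟨0, hn⟩ : Fin n) = j) := fun hh => hj (by rw [← hh])
      simp [hj, this]
  rw [Finset.sum_congr rfl fun j _ => h j, Finset.sum_add_distrib]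
  simp [Finset.sum_ite_eq, Finset.card_univ]
  ring

lemma star_det_form {n : ℕ} (hn : 2 ≤ n) (α x : ℝ)
    (hx : x ≠ α * (2 * (n : ℝ) - 1) - 2) :
    (x • (1 : Matrix (Fin n) (Fin n) ℝ) - alphaDistMatrix (starGraph n) α).det =
      (x - (α * (2 * (n : ℝ) - 1) - 2)) ^ (n - 2) *
        ((x - (α * (2 * (n : ℝ) - 1) - 2)) ^ 2
          - (((1 - α) + 2 * (1 - α) * ((n : ℝ) - 1)) + (1 + α - α * n)) *
            (x - (α * (2 * (n : ℝ) - 1) - 2))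
          + (((1 - α) + 2 * (1 - α) * ((n : ℝ) - 1)) * (1 + α - α * n)
              - (1 - α) * ((1 + α - α * (n : ℝ)) + (α - 1) * ((n : ℝ) - 1)))) := by
  have hnpos : 0 < n := by omega
  set μ : ℝ := α * (2 * (n : ℝ) - 1) - 2 with hμ
  set y : ℝ := x - μ with hy
  have hy0 : y ≠ 0 := sub_ne_zero.mpr hx
  rw [star_decomp hn]
  have h1 : x • (1 : Matrix (Fin n) (Fin n) ℝ) - (μ • 1 + starC n * starR n α) =
      y • (1 : Matrix (Fin n) (Fin n) ℝ) - starC n * starR n α := by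
    rw [hy, sub_smul]; module
  rw [h1]
  have h2 : y • (1 : Matrix (Fin n) (Fin n) ℝ) - starC n * starR n α =
      y • ((1 : Matrix (Fin n) (Fin n) ℝ) - starC n * (y⁻¹ • starR n α)) := by
    rw [smul_sub, Matrix.mul_smul, smul_smul, mul_inv_cancel₀ hy0, one_smul]
  rw [h2, Matrix.det_smul, Matrix.det_one_sub_mul_comm, Matrix.smul_mul]
  have e00 : (starR n α * starC n) 0 0 = (1 - α) + 2 * (1 - α) * ((n : ℝ) - 1) := by
    rw [Matrix.mul_apply,
      show (fun j => starR n α 0 j * starC n j 0) =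
        fun j : Fin n => if (j : ℕ) = 0 then (1 - α) else 2 * (1 - α) from
        funext fun j => by by_cases hj : (j : ℕ) = 0 <;> simp [starR, starC, hj]]
    exact sum_ite_zero' hnpos _ _
  have e01 : (starR n α * starC n) 0 1 = (1 - α) + 0 * ((n : ℝ) - 1) := by
    rw [Matrix.mul_apply,
      show (fun j => starR n α 0 j * starC n j 1) =
        fun j : Fin n => if (j : ℕ) = 0 then (1 - α) else 0 from
        funext fun j => by by_cases hj : (j : ℕ) = 0 <;> simp [starR, starC, hj]]
    exact sum_ite_zero' hnpos _ _
  have e10 : (starR n α * starC n) 1 0 = (1 + α - α * (n : ℝ)) + (α - 1) * ((n : ℝ) - 1) := by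
    rw [Matrix.mul_apply,
      show (fun j => starR n α 1 j * starC n j 0) =
        fun j : Fin n => if (j : ℕ) = 0 then (1 + α - α * (n : ℝ)) else (α - 1) from
        funext fun j => by by_cases hj : (j : ℕ) = 0 <;> simp [starR, starC, hj]]
    exact sum_ite_zero' hnpos _ _
  have e11 : (starR n α * starC n) 1 1 = (1 + α - α * (n : ℝ)) + 0 * ((n : ℝ) - 1) := by
    rw [Matrix.mul_apply,
      show (fun j => starR n α 1 j * starC n j 1) =
        fun j : Fin n => if (j : ℕ) = 0 then (1 + α - α * (n : ℝ)) else 0 from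
        funext fun j => by by_cases hj : (j : ℕ) = 0 <;> simp [starR, starC, hj]]
    exact sum_ite_zero' hnpos _ _
  rw [Matrix.det_fin_two]
  simp only [Matrix.sub_apply, Matrix.smul_apply, Matrix.one_apply, smul_eq_mul]
  rw [e00, e01, e10, e11]
  have hcard : Fintype.card (Fin n) = n := Fintype.card_fin n
  rw [hcard]
  have hpow : y ^ n = y ^ (n - 2) * y ^ 2 := by
    rw [← pow_add]; congr 1; omega
  rw [hpow, mul_assoc]
  congr 1
  norm_num
  field_simp
  ring

lemma star_wiener {n : ℕ} (hn : 2 ≤ n) : wiener (starGraph n) = ((n : ℝ) - 1) ^ 2 := by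
  have hnpos : 0 < n := by omega
  unfold wiener
  have h : ∀ i : Fin n, ∑ j, ((starGraph n).dist i j : ℝ) =
      if (i : ℕ) = 0 then ((n : ℝ) - 1) else (2 * (n : ℝ) - 3) := by
    intro i
    rcases eq_or_ne ((i : ℕ)) 0 with hi | hi
    · rw [if_pos hi]; exact star_trans_zero hn i hi
    · rw [if_neg hi]; exact star_trans_ne hn i hi
  rw [Finset.sum_congr rfl fun i _ => h i, sum_ite_zero' hnpos]
  have hn' : (2 : ℝ) ≤ (n : ℝ) := by exact_mod_cast hn
  ring

lemma key_ineq' {n a : ℝ} (hn : 2 ≤ n) (h0 : 0 ≤ a) (h1 : a ≤ 1) :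
    (a * (-3 * n ^ 2 + 8 * n - 4) + 2 * n ^ 2 - 4 * n) ^ 2 ≤
      n ^ 2 * ((a - 2) ^ 2 * n ^ 2 + 8 * a * n - 12 * n - 8 * a + 12) := by
  have hh : 0 ≤ 4*a^2+8*n*a-12*n*a^2+n^2-10*n^2*a+10*n^2*a^2+2*n^3*a-2*n^3*a^2 := by
    nlinarith [sq_nonneg (n-2), sq_nonneg (1-a), sq_nonneg ((n-2)*(1-a)), sq_nonneg (n*(1-a)-2*a),
      mul_nonneg (mul_nonneg h0 (sub_nonneg.2 h1)) (by linarith : (0:ℝ) ≤ n - 2),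
      mul_nonneg (mul_nonneg (mul_nonneg h0 (sub_nonneg.2 h1)) (by linarith : (0:ℝ) ≤ n - 2))
        (by linarith : (0:ℝ) ≤ n),
      sq_nonneg (n - 2*a), sq_nonneg (n*a - 2)]
  nlinarith [mul_nonneg (by linarith : (0:ℝ) ≤ n - 1) hh]

theorem stmt_3 {n : ℕ} (hn : 2 ≤ n) (α : ℝ) (hα : α ∈ Set.Icc (0 : ℝ) 1)
    (hA : (alphaDistMatrix (starGraph n) α).IsHermitian) :
    (∑ i, |hA.eigenvalues i - 2 * α * wiener (starGraph n) / n|) =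
      (α * (-3 * (n : ℝ) ^ 2 + 8 * n - 4) + 2 * (n : ℝ) ^ 2 - 4 * n +
          n * Real.sqrt ((α - 2) ^ 2 * (n : ℝ) ^ 2 + 8 * α * n - 12 * n - 8 * α + 12)) /
        (2 * n) +
      |(α * (-3 * (n : ℝ) ^ 2 + 8 * n - 4) + 2 * (n : ℝ) ^ 2 - 4 * n -
          n * Real.sqrt ((α - 2) ^ 2 * (n : ℝ) ^ 2 + 8 * α * n - 12 * n - 8 * α + 12)) /
        (2 * n)| +
      |3 * α - 2 - 2 * α / n| * ((n : ℝ) - 2) := by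
  obtain ⟨hα0, hα1⟩ := hα
  have hnpos : 0 < n := by omega
  rw [star_wiener hn]
  set N : ℝ := (n : ℝ) with hNdef
  have hN2 : (2 : ℝ) ≤ N := by rw [hNdef]; exact_mod_cast hn
  have hNne : N ≠ 0 := by linarith
  set Δ : ℝ := (α - 2) ^ 2 * N ^ 2 + 8 * α * N - 12 * N - 8 * α + 12 with hΔdef
  set E : ℝ := α * (-3 * N ^ 2 + 8 * N - 4) + 2 * N ^ 2 - 4 * N with hEdef
  set s : ℝ := Real.sqrt Δ with hsdef
  set c : ℝ := 2 * α * (N - 1) ^ 2 / N with hcdef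
  set μ : ℝ := α * (2 * N - 1) - 2 with hμdef
  have hEΔ : E ^ 2 ≤ N ^ 2 * Δ := key_ineq' hN2 hα0 hα1
  have hΔ0 : 0 ≤ Δ := by nlinarith [sq_nonneg E]
  have hs2 : s ^ 2 = Δ := Real.sq_sqrt hΔ0
  have hs0 : 0 ≤ s := Real.sqrt_nonneg _
  have hNs : |E| ≤ N * s := by
    have h1 : |E| = Real.sqrt (E ^ 2) := (Real.sqrt_sq_eq_abs E).symm
    have h2 : N * s = Real.sqrt (N ^ 2 * Δ) := by
      rw [hsdef, Real.sqrt_mul (sq_nonneg N), Real.sqrt_sq (by linarith : (0:ℝ) ≤ N)]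
    rw [h1, h2]
    exact Real.sqrt_le_sqrt hEΔ
  set lp : ℝ := c + (E + N * s) / (2 * N) with hpdef
  set lm : ℝ := c + (E - N * s) / (2 * N) with hmdef
  set t' : ℝ := ((1 - α) + 2 * (1 - α) * (N - 1)) + (1 + α - α * N) with htdef
  set d' : ℝ := ((1 - α) + 2 * (1 - α) * (N - 1)) * (1 + α - α * N)
      - (1 - α) * ((1 + α - α * N) + (α - 1) * (N - 1)) with hddef
  have hsum : lp + lm = 2 * μ + t' := by
    rw [hpdef, hmdef, hμdef, htdef, hcdef]
    field_simp
    ring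
  have hprod : lp * lm = μ ^ 2 + t' * μ + d' := by
    have h1 : lp * lm = ((2 * N * c + E) ^ 2 - N ^ 2 * s ^ 2) / (4 * N ^ 2) := by
      rw [hpdef, hmdef]
      field_simp
      ring
    rw [h1, hs2, hΔdef, hcdef, hμdef, htdef, hddef]
    field_simp
    ring
  have hfact : ∀ x : ℝ, (x - μ) ^ 2 - t' * (x - μ) + d' = (x - lp) * (x - lm) := by
    intro x
    linear_combination x * hsum - hprod
  have hdetform : ∀ x : ℝ, x ≠ μ →
      (x • (1 : Matrix (Fin n) (Fin n) ℝ) - alphaDistMatrix (starGraph n) α).det =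
        (x - μ) ^ (n - 2) * ((x - lp) * (x - lm)) := by
    intro x hx
    rw [star_det_form hn α x (by rw [hμdef] at hx; exact hx)]
    simp only [← hNdef, ← hμdef, ← htdef, ← hddef]
    rw [hfact x]
  have hdetprod : ∀ x : ℝ,
      (x • (1 : Matrix (Fin n) (Fin n) ℝ) - alphaDistMatrix (starGraph n) α).det =
        ∏ i, (x - hA.eigenvalues i) := fun x => det_smul_one_sub_eq hA x
  have hPeq : (∏ i, (X - Polynomial.C (hA.eigenvalues i)) : Polynomial ℝ) =
      (X - Polynomial.C μ) ^ (n - 2) *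
        ((X - Polynomial.C lp) * (X - Polynomial.C lm)) := by
    have hinf : ({μ}ᶜ : Set ℝ).Infinite := (Set.finite_singleton μ).infinite_compl
    have hsub : ({μ}ᶜ : Set ℝ) ⊆
        {x | Polynomial.eval x (∏ i, (X - Polynomial.C (hA.eigenvalues i)) : Polynomial ℝ) =
          Polynomial.eval x ((X - Polynomial.C μ) ^ (n - 2) *
            ((X - Polynomial.C lp) * (X - Polynomial.C lm)))} := by
      intro x hx
      have hxμ : x ≠ μ := by simpa using hx
      have e1 : Polynomial.eval x (∏ i, (X - Polynomial.C (hA.eigenvalues i)) : Polynomial ℝ) =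
          ∏ i, (x - hA.eigenvalues i) := by
        simp [Polynomial.eval_prod]
      have e2 : Polynomial.eval x ((X - Polynomial.C μ) ^ (n - 2) *
          ((X - Polynomial.C lp) * (X - Polynomial.C lm))) =
          (x - μ) ^ (n - 2) * ((x - lp) * (x - lm)) := by
        simp
      simp only [Set.mem_setOf_eq, e1, e2]
      rw [← hdetprod x, hdetform x hxμ]
    exact Polynomial.eq_of_infinite_eval_eq _ _ (hinf.mono hsub)
  have hroots : Multiset.map hA.eigenvalues Finset.univ.val =
      Multiset.replicate (n - 2) μ + (lp ::ₘ lm ::ₘ 0) := by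
    have h1 : (∏ i, (X - Polynomial.C (hA.eigenvalues i)) : Polynomial ℝ).roots =
        Multiset.map hA.eigenvalues Finset.univ.val := by
      rw [show (∏ i, (X - Polynomial.C (hA.eigenvalues i)) : Polynomial ℝ) =
          ((Multiset.map hA.eigenvalues Finset.univ.val).map
            (fun a => X - Polynomial.C a)).prod from by
        rw [Multiset.map_map, Finset.prod_eq_multiset_prod]; rfl]
      exact Polynomial.roots_multiset_prod_X_sub_C _
    have h2 : ((X - Polynomial.C μ) ^ (n - 2) *
        ((X - Polynomial.C lp) * (X - Polynomial.C lm))).roots =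
        Multiset.replicate (n - 2) μ + (lp ::ₘ lm ::ₘ 0) := by
      rw [show (X - Polynomial.C μ) ^ (n - 2) *
          ((X - Polynomial.C lp) * (X - Polynomial.C lm)) =
          ((Multiset.replicate (n - 2) μ + (lp ::ₘ lm ::ₘ 0)).map
            (fun a => X - Polynomial.C a)).prod from by
        simp [Multiset.map_add, Multiset.prod_add, Multiset.map_replicate,
          Multiset.prod_replicate]
        ring]
      exact Polynomial.roots_multiset_prod_X_sub_C _
    rw [← h1, hPeq, h2]
  have hsum2 : (∑ i, |hA.eigenvalues i - c|) =
      ((Multiset.map hA.eigenvalues Finset.univ.val).map (fun z => |z - c|)).sum := by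
    rw [Multiset.map_map, Finset.sum_eq_multiset_sum]
    rfl
  rw [hsum2, hroots]
  simp only [Multiset.map_add, Multiset.sum_add, Multiset.map_replicate,
    Multiset.sum_replicate, Multiset.map_cons, Multiset.sum_cons, Multiset.map_zero,
    Multiset.sum_zero, add_zero]
  have habs1 : |μ - c| = |3 * α - 2 - 2 * α / N| := by
    rw [show μ - c = 3 * α - 2 - 2 * α / N from by
      rw [hμdef, hcdef]; field_simp; ring]
  have habs2 : |lp - c| = (E + N * s) / (2 * N) := by
    rw [show lp - c = (E + N * s) / (2 * N) from by rw [hpdef]; ring]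
    apply abs_of_nonneg
    apply div_nonneg _ (by linarith : (0:ℝ) ≤ 2 * N)
    have := neg_abs_le E
    linarith
  have habs3 : |lm - c| = |(E - N * s) / (2 * N)| := by
    rw [show lm - c = (E - N * s) / (2 * N) from by rw [hmdef]; ring]
  rw [habs1, habs2, habs3, nsmul_eq_mul]
  have hcast : ((n - 2 : ℕ) : ℝ) = N - 2 := by
    rw [Nat.cast_sub hn, hNdef]
    norm_num
  rw [hcast]
  ring
end

section
/- Let G be a simple undirected connected graph with n ≥ 2 vertices and α ∈ [0,1]. Then the α-distance energy satisfies ς_α(G) ≤ √(n·Z(G)), where Z(G) = (1−α)²‖D(G)‖_F² + α² Σ_{i=1}^n (Tr(v_i) − 2W(G)/n)². -/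
open Finset Matrix Polynomial Real

lemma my_trace_eq {m : ℕ} {A : Matrix (Fin m) (Fin m) ℝ} (hA : A.IsHermitian) :
    A.trace = ∑ i, hA.eigenvalues i := by
  set U := (hA.eigenvectorUnitary : Matrix (Fin m) (Fin m) ℝ) with hUdef
  have h := hA.spectral_theorem
  rw [Unitary.conjStarAlgAut_apply] at h
  have hU : star U * U = 1 := Unitary.coe_star_mul_self hA.eigenvectorUnitary
  calc A.trace = (U * diagonal (RCLike.ofReal ∘ hA.eigenvalues) * star U).trace := by rw [← h]
    _ = (star U * U * diagonal (RCLike.ofReal ∘ hA.eigenvalues)).trace := by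
        rw [Matrix.trace_mul_cycle, mul_assoc]
    _ = ∑ i, hA.eigenvalues i := by
        rw [hU, one_mul, Matrix.trace_diagonal]; simp [RCLike.ofReal]

lemma my_trace_sq_eq {m : ℕ} {A : Matrix (Fin m) (Fin m) ℝ} (hA : A.IsHermitian) :
    (A * A).trace = ∑ i, hA.eigenvalues i ^ 2 := by
  set U := (hA.eigenvectorUnitary : Matrix (Fin m) (Fin m) ℝ) with hUdef
  set D := diagonal (RCLike.ofReal ∘ hA.eigenvalues : Fin m → ℝ) with hDdef
  have h := hA.spectral_theorem
  rw [Unitary.conjStarAlgAut_apply] at h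
  have hU : star U * U = 1 := Unitary.coe_star_mul_self hA.eigenvectorUnitary
  have h2 : A * A = U * (D * D) * star U := by
    conv_lhs => rw [h]
    rw [show U * D * star U * (U * D * star U) = U * D * (star U * U) * (D * star U) by simp only [mul_assoc],
      hU, mul_one]; simp only [mul_assoc]
  rw [h2, Matrix.trace_mul_cycle, ← mul_assoc, hU, one_mul, hDdef, diagonal_mul_diagonal,
    Matrix.trace_diagonal]
  simp [RCLike.ofReal, sq]

theorem stmt_5 {n : ℕ} (hn : 2 ≤ n) (G : SimpleGraph (Fin n)) (hG : G.Connected)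
    (α : ℝ) (hα : α ∈ Set.Icc (0 : ℝ) 1)
    (hA : (alphaDistMatrix G α).IsHermitian) :
    (∑ i, |hA.eigenvalues i - 2 * α * wiener G / n|) ≤
      Real.sqrt ((n : ℝ) *
        ((1 - α) ^ 2 * (frobNorm (distMatrix G)) ^ 2 +
          α ^ 2 * ∑ i, (transmission G i - 2 * wiener G / n) ^ 2)) := by
  set A := alphaDistMatrix G α with hAdef
  set c : ℝ := 2 * α * wiener G / n with hc
  set SD : ℝ := ∑ i, ∑ j, ((G.dist i j : ℝ))^2 with hSD
  set Z : ℝ := (1 - α) ^ 2 * (frobNorm (distMatrix G)) ^ 2 +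
      α ^ 2 * ∑ i, (transmission G i - 2 * wiener G / n) ^ 2 with hZ
  -- entries of A
  have hdiagA : ∀ i, A i i = α * transmission G i := by
    intro i
    simp [hAdef, alphaDistMatrix, distMatrix, Matrix.add_apply, Matrix.smul_apply,
      Matrix.diagonal_apply_eq, SimpleGraph.dist_self]
  have hsymm : ∀ i j, A j i = A i j := fun i j => by simpa using hA.apply i j
  -- trace A
  have htrA : A.trace = 2 * α * wiener G := by
    rw [Matrix.trace]
    simp only [Matrix.diag_apply, hdiagA]
    rw [← Finset.mul_sum]
    simp only [transmission, wiener]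
    ring
  -- sum of squares of entries
  have hentry : ∀ i j, (A i j)^2 = (1 - α)^2 * ((G.dist i j : ℝ))^2 +
      (if i = j then α^2 * (transmission G i)^2 else 0) := by
    intro i j
    by_cases h : i = j
    · subst h
      rw [hdiagA i]
      simp [SimpleGraph.dist_self]
      ring
    · have : A i j = (1 - α) * (G.dist i j : ℝ) := by
        simp [hAdef, alphaDistMatrix, distMatrix, Matrix.add_apply, Matrix.smul_apply,
          Matrix.diagonal_apply_ne _ h]
      rw [this, if_neg h]
      ring
  have htrAA : (A * A).trace = (1 - α)^2 * SD + α^2 * ∑ i, (transmission G i)^2 := by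
    rw [Matrix.trace]
    simp only [Matrix.diag_apply, Matrix.mul_apply]
    have : ∀ i j, A i j * A j i = (A i j)^2 := by
      intro i j; rw [hsymm j i]; ring
    calc (∑ i, ∑ j, A i j * A j i) = ∑ i, ∑ j, (A i j)^2 := by
          simp only [this]
      _ = ∑ i, ∑ j, ((1 - α)^2 * ((G.dist i j : ℝ))^2 +
            (if i = j then α^2 * (transmission G i)^2 else 0)) := by
          simp only [hentry]
      _ = (1 - α)^2 * SD + α^2 * ∑ i, (transmission G i)^2 := by
          simp only [Finset.sum_add_distrib, Finset.sum_ite_eq, Finset.mem_univ, if_true]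
          rw [hSD, Finset.mul_sum, Finset.mul_sum]
          congr 1
          exact Finset.sum_congr rfl fun i _ => (Finset.mul_sum _ _ _).symm
  -- frobNorm squared
  have hfrob : (frobNorm (distMatrix G))^2 = SD := by
    rw [frobNorm, Real.sq_sqrt (by positivity)]
    rfl
  -- sum of eigenvalue deviations squared
  have hsumTr : ∑ i, transmission G i = 2 * wiener G := by
    simp only [transmission, wiener]; ring
  have hS : ∑ i, (hA.eigenvalues i - c)^2 = Z := by
    have expand : ∑ i, (hA.eigenvalues i - c)^2 =
        (∑ i, hA.eigenvalues i ^ 2) - 2 * c * (∑ i, hA.eigenvalues i) + n * c^2 := by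
      simp only [sub_sq, Finset.sum_add_distrib, Finset.sum_sub_distrib, ← Finset.sum_mul,
        ← Finset.mul_sum, Finset.sum_const, Finset.card_univ, Fintype.card_fin, nsmul_eq_mul]
      ring
    rw [expand, ← my_trace_eq hA, ← my_trace_sq_eq hA, htrA, htrAA, hZ, hfrob]
    have expand2 : ∑ i, (transmission G i - 2 * wiener G / n) ^ 2 =
        (∑ i, (transmission G i)^2) - 2 * (2 * wiener G / n) * (∑ i, transmission G i)
          + n * (2 * wiener G / n)^2 := by
      simp only [sub_sq, Finset.sum_add_distrib, Finset.sum_sub_distrib, ← Finset.sum_mul,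
        ← Finset.mul_sum, Finset.sum_const, Finset.card_univ, Fintype.card_fin, nsmul_eq_mul]
      ring
    rw [expand2, hsumTr, hc]
    ring
  -- Cauchy-Schwarz
  have hCS : (∑ i, |hA.eigenvalues i - c|)^2 ≤ (n : ℝ) * Z := by
    have := sq_sum_le_card_mul_sum_sq (s := (Finset.univ : Finset (Fin n)))
      (f := fun i => |hA.eigenvalues i - c|)
    simp only [Finset.card_univ, Fintype.card_fin, sq_abs] at this
    calc (∑ i, |hA.eigenvalues i - c|)^2 ≤ (n : ℝ) * ∑ i, (hA.eigenvalues i - c)^2 := this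
      _ = (n : ℝ) * Z := by rw [hS]
  have hnonneg : 0 ≤ ∑ i, |hA.eigenvalues i - c| := Finset.sum_nonneg fun i _ => abs_nonneg _
  exact (Real.le_sqrt hnonneg ((sq_nonneg _).trans hCS)).mpr hCS
end

section
/- Let G be a simple undirected connected graph with n ≥ 2 vertices and α ∈ [0,1]. Then ς_α(G) ≤ √( (α² Σ_{i=1}^n Tr(v_i)² + 2(1−α)² S)·n − 4α² W(G)² ), where S = Σ_{1≤i<j≤n} d(v_i,v_j)². -/
open Finset Matrix Polynomial Real

/-- `S = ∑_{i<j} d(v_i,v_j)²`. -/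
noncomputable def distSq {n : ℕ} (G : SimpleGraph (Fin n)) : ℝ :=
  ∑ p ∈ Finset.univ.filter (fun p : Fin n × Fin n => p.1 < p.2), (G.dist p.1 p.2 : ℝ) ^ 2

lemma sum_eig {m : ℕ} {A : Matrix (Fin m) (Fin m) ℝ} (hA : A.IsHermitian) :
    ∑ i, hA.eigenvalues i = A.trace := by
  conv_rhs => rw [hA.spectral_theorem, Unitary.conjStarAlgAut_apply]
  rw [Matrix.trace_mul_cycle,
    (Matrix.mem_unitaryGroup_iff').mp (hA.eigenvectorUnitary).2, one_mul,
    Matrix.trace_diagonal]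
  simp

lemma sum_eig_sq {m : ℕ} {A : Matrix (Fin m) (Fin m) ℝ} (hA : A.IsHermitian) :
    ∑ i, (hA.eigenvalues i)^2 = (A * A).trace := by
  conv_rhs => rw [hA.spectral_theorem, Unitary.conjStarAlgAut_apply]
  rw [show ((hA.eigenvectorUnitary : Matrix (Fin m) (Fin m) ℝ) * diagonal (RCLike.ofReal ∘ hA.eigenvalues)
      * star (hA.eigenvectorUnitary : Matrix (Fin m) (Fin m) ℝ)) *
      ((hA.eigenvectorUnitary : Matrix (Fin m) (Fin m) ℝ) * diagonal (RCLike.ofReal ∘ hA.eigenvalues)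
      * star (hA.eigenvectorUnitary : Matrix (Fin m) (Fin m) ℝ)) =
      (hA.eigenvectorUnitary : Matrix (Fin m) (Fin m) ℝ) *
      (diagonal (RCLike.ofReal ∘ hA.eigenvalues) * ((star (hA.eigenvectorUnitary : Matrix (Fin m) (Fin m) ℝ)) *
       (hA.eigenvectorUnitary : Matrix (Fin m) (Fin m) ℝ)) * diagonal (RCLike.ofReal ∘ hA.eigenvalues)) *
      star (hA.eigenvectorUnitary : Matrix (Fin m) (Fin m) ℝ) by simp only [mul_assoc],
    (Matrix.mem_unitaryGroup_iff').mp (hA.eigenvectorUnitary).2, mul_one,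
    Matrix.trace_mul_cycle,
    (Matrix.mem_unitaryGroup_iff').mp (hA.eigenvectorUnitary).2, one_mul,
    Matrix.diagonal_mul_diagonal, Matrix.trace_diagonal]
  simp [sq]

theorem stmt_6 {n : ℕ} (hn : 2 ≤ n) (G : SimpleGraph (Fin n)) (hG : G.Connected)
    (α : ℝ) (hα : α ∈ Set.Icc (0 : ℝ) 1)
    (hA : (alphaDistMatrix G α).IsHermitian) :
    (∑ i, |hA.eigenvalues i - 2 * α * wiener G / n|) ≤
      Real.sqrt ((α ^ 2 * (∑ i, (transmission G i) ^ 2) + 2 * (1 - α) ^ 2 * distSq G) * (n : ℝ)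
        - 4 * α ^ 2 * (wiener G) ^ 2) := by
  have hn0 : (0:ℝ) < n := by positivity
  have hnne : (n:ℝ) ≠ 0 := ne_of_gt hn0
  set μ : ℝ := 2 * α * wiener G / n with hμ
  set lam := hA.eigenvalues with hlam
  -- trace = 2 α W
  have hT : ∑ i, lam i = 2 * α * wiener G := by
    rw [hlam, sum_eig hA, Matrix.trace]
    have : ∀ i : Fin n, (alphaDistMatrix G α).diag i = α * transmission G i := by
      intro i
      simp [alphaDistMatrix, distMatrix, Matrix.diag, SimpleGraph.dist_self]
    rw [Finset.sum_congr rfl (fun i _ => this i)]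
    rw [← Finset.mul_sum]
    simp only [wiener, transmission]
    ring
  -- entrywise square formula
  have hentry : ∀ i j : Fin n, (alphaDistMatrix G α i j)^2 =
      α^2 * (if i = j then (transmission G i)^2 else 0) + (1-α)^2 * (G.dist i j : ℝ)^2 := by
    intro i j
    by_cases h : i = j
    · subst h
      simp [alphaDistMatrix, distMatrix, Matrix.diagonal, SimpleGraph.dist_self, mul_pow]
    · simp [alphaDistMatrix, distMatrix, Matrix.diagonal, h, mul_pow]
  -- sum of off-diagonal squares = 2S
  have h2S : ∑ i, ∑ j, (G.dist i j : ℝ)^2 = 2 * distSq G := by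
    rw [← Finset.sum_product']
    rw [← Finset.sum_filter_add_sum_filter_not (Finset.univ ×ˢ Finset.univ)
      (fun p : Fin n × Fin n => p.1 < p.2)]
    have e1 : Finset.filter (fun p : Fin n × Fin n => p.1 < p.2) (Finset.univ ×ˢ Finset.univ)
        = Finset.filter (fun p : Fin n × Fin n => p.1 < p.2) Finset.univ := by
      rw [Finset.univ_product_univ]
    rw [e1]
    rw [← Finset.sum_filter_add_sum_filter_not
      (Finset.filter (fun p : Fin n × Fin n => ¬ p.1 < p.2) (Finset.univ ×ˢ Finset.univ))
      (fun p : Fin n × Fin n => p.2 < p.1)]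
    have e2 : Finset.filter (fun p : Fin n × Fin n => p.2 < p.1)
        (Finset.filter (fun p : Fin n × Fin n => ¬ p.1 < p.2) (Finset.univ ×ˢ Finset.univ))
        = Finset.filter (fun p : Fin n × Fin n => p.2 < p.1) Finset.univ := by
      rw [Finset.filter_filter, Finset.univ_product_univ]
      apply Finset.filter_congr
      intro p _
      constructor
      · rintro ⟨_, h⟩; exact h
      · intro h; exact ⟨asymm h, h⟩
    rw [e2]
    have e3 : ∑ p ∈ Finset.filter (fun p : Fin n × Fin n => ¬ p.2 < p.1)
        (Finset.filter (fun p : Fin n × Fin n => ¬ p.1 < p.2) (Finset.univ ×ˢ Finset.univ)),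
        (G.dist p.1 p.2 : ℝ)^2 = 0 := by
      apply Finset.sum_eq_zero
      intro p hp
      simp only [Finset.mem_filter] at hp
      have : p.1 = p.2 := le_antisymm (not_lt.mp hp.2) (not_lt.mp hp.1.2)
      rw [this]
      simp [SimpleGraph.dist_self]
    rw [e3]
    have e4 : ∑ p ∈ Finset.filter (fun p : Fin n × Fin n => p.2 < p.1) Finset.univ,
        (G.dist p.1 p.2 : ℝ)^2 = distSq G := by
      rw [distSq]
      apply Finset.sum_equiv (Equiv.prodComm (Fin n) (Fin n))
      · intro p; simp
      · intro p _; simp [SimpleGraph.dist_comm]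
    rw [e4, distSq]
    ring
  -- sum of eigenvalue squares
  have hQ : ∑ i, (lam i)^2 =
      α^2 * (∑ i, (transmission G i)^2) + 2 * (1-α)^2 * distSq G := by
    rw [hlam, sum_eig_sq hA]
    have htr : (alphaDistMatrix G α * alphaDistMatrix G α).trace
        = ∑ i, ∑ j, (alphaDistMatrix G α i j)^2 := by
      rw [Matrix.trace]
      apply Finset.sum_congr rfl
      intro i _
      rw [Matrix.diag, Matrix.mul_apply]
      apply Finset.sum_congr rfl
      intro j _
      rw [← hA.apply j i, star_trivial, sq]
    rw [htr]
    have : ∑ i, ∑ j, (alphaDistMatrix G α i j)^2 =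
        ∑ i, ∑ j, (α^2 * (if i = j then (transmission G i)^2 else 0)
          + (1-α)^2 * (G.dist i j : ℝ)^2) := by
      apply Finset.sum_congr rfl; intro i _
      apply Finset.sum_congr rfl; intro j _
      exact hentry i j
    rw [this]
    have s1 : ∑ i : Fin n, ∑ j : Fin n,
        (if i = j then (transmission G i)^2 else 0) = ∑ i, (transmission G i)^2 := by
      simp
    simp only [Finset.sum_add_distrib, ← Finset.mul_sum]
    rw [s1, h2S]
    ring
  -- Cauchy–Schwarz
  have cs : (∑ i, |lam i - μ|)^2 ≤ (n:ℝ) * ∑ i, (lam i - μ)^2 := by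
    have := sq_sum_le_card_mul_sum_sq (s := (Finset.univ : Finset (Fin n)))
      (f := fun i => |lam i - μ|)
    simp only [Finset.card_univ, Fintype.card_fin, sq_abs] at this
    exact_mod_cast this
  -- expand the variance
  have hvar : (n:ℝ) * ∑ i, (lam i - μ)^2 =
      (α ^ 2 * (∑ i, (transmission G i) ^ 2) + 2 * (1 - α) ^ 2 * distSq G) * (n : ℝ)
        - 4 * α ^ 2 * (wiener G) ^ 2 := by
    have expand : ∑ i, (lam i - μ)^2 =
        (∑ i, (lam i)^2) - 2*μ*(∑ i, lam i) + (n:ℝ)*μ^2 := by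
      have : ∀ i : Fin n, (lam i - μ)^2 = (lam i)^2 - 2*μ*(lam i) + μ^2 := fun i => by ring
      rw [Finset.sum_congr rfl (fun i _ => this i)]
      rw [Finset.sum_add_distrib, Finset.sum_sub_distrib, ← Finset.mul_sum,
        Finset.sum_const, Finset.card_univ, Fintype.card_fin, nsmul_eq_mul]
    rw [expand, hQ, hT, hμ]
    field_simp
    ring
  have habs : (0:ℝ) ≤ ∑ i, |lam i - μ| := Finset.sum_nonneg fun i _ => abs_nonneg _
  calc ∑ i, |lam i - μ| = Real.sqrt ((∑ i, |lam i - μ|)^2) := (Real.sqrt_sq habs).symm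
    _ ≤ Real.sqrt ((n:ℝ) * ∑ i, (lam i - μ)^2) := Real.sqrt_le_sqrt cs
    _ = _ := by rw [hvar]
end

section
/- Let G be a simple undirected connected graph with n ≥ 2 vertices, and set T = max_{v∈V(G)} Tr(v) and t = min_{v∈V(G)} Tr(v). Then for every vertex u of G: 2W(G) + (t−1)·Tr(u) − (n−1)·t ≤ Σ_{v≠u} d(u,v)·Tr(v) ≤ 2W(G) + (T−1)·Tr(u) − (n−1)·T. -/
open Finset Matrix Polynomial Real

theorem stmt_10 {n : ℕ} (hn : 2 ≤ n) (G : SimpleGraph (Fin n)) (hG : G.Connected)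
    (u : Fin n) :
    2 * wiener G + (sInf (Set.range (transmission G)) - 1) * transmission G u -
        ((n : ℝ) - 1) * sInf (Set.range (transmission G)) ≤
      (∑ v ∈ Finset.univ.filter (fun v => v ≠ u), (G.dist u v : ℝ) * transmission G v) ∧
    (∑ v ∈ Finset.univ.filter (fun v => v ≠ u), (G.dist u v : ℝ) * transmission G v) ≤
      2 * wiener G + (sSup (Set.range (transmission G)) - 1) * transmission G u -
        ((n : ℝ) - 1) * sSup (Set.range (transmission G)) := by
  have hne : (0 : ℕ) < n := by omega
  haveI : NeZero n := ⟨by omega⟩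
  set t := sInf (Set.range (transmission G)) with ht
  set T := sSup (Set.range (transmission G)) with hT
  have hrne : (Set.range (transmission G)).Nonempty := Set.range_nonempty _
  have hfin : (Set.range (transmission G)).Finite := Set.finite_range _
  have htle : ∀ v, t ≤ transmission G v := fun v =>
    csInf_le hfin.bddBelow ⟨v, rfl⟩
  have hleT : ∀ v, transmission G v ≤ T := fun v =>
    le_csSup hfin.bddAbove ⟨v, rfl⟩
  have hd1 : ∀ v ∈ Finset.univ.filter (fun v => v ≠ u), (1 : ℝ) ≤ (G.dist u v : ℝ) := by
    intro v hv
    simp only [Finset.mem_filter] at hv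
    exact_mod_cast hG.pos_dist_of_ne (Ne.symm hv.2)
  -- sums over the filter
  have hsum_d : ∑ v ∈ Finset.univ.filter (fun v => v ≠ u), (G.dist u v : ℝ)
      = transmission G u := by
    rw [transmission]
    rw [← Finset.sum_filter_add_sum_filter_not Finset.univ (fun v => v ≠ u)
      (fun v => (G.dist u v : ℝ))]
    simp [Finset.filter_eq']
  have hcard : (Finset.univ.filter (fun v => v ≠ u)).card = n - 1 := by
    have : Finset.univ.filter (fun v => v ≠ u) = Finset.univ \ {u} := by
      ext v; simp
    rw [this, Finset.card_sdiff_of_subset (by simp)]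
    simp
  have hsum_tr : ∑ v ∈ Finset.univ.filter (fun v => v ≠ u), transmission G v
      = 2 * wiener G - transmission G u := by
    have h2w : 2 * wiener G = ∑ v, transmission G v := by
      simp only [wiener, transmission]; ring
    rw [h2w, ← Finset.sum_filter_add_sum_filter_not Finset.univ (fun v => v ≠ u)
      (fun v => transmission G v)]
    simp [Finset.filter_eq']
  have hcardR : ∑ v ∈ Finset.univ.filter (fun v => v ≠ u), (1 : ℝ) = (n : ℝ) - 1 := by
    rw [Finset.sum_const, hcard]
    have : ((n - 1 : ℕ) : ℝ) = (n : ℝ) - 1 := by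
      have : (1 : ℕ) ≤ n := by omega
      push_cast [Nat.cast_sub this]; ring
    simp [this]
  constructor
  · have key : ∑ v ∈ Finset.univ.filter (fun v => v ≠ u),
        (transmission G v + ((G.dist u v : ℝ) - 1) * t) ≤
        ∑ v ∈ Finset.univ.filter (fun v => v ≠ u), (G.dist u v : ℝ) * transmission G v := by
      apply Finset.sum_le_sum
      intro v hv
      have h1 := hd1 v hv
      have h2 := htle v
      nlinarith
    calc 2 * wiener G + (t - 1) * transmission G u - ((n : ℝ) - 1) * t
        = (2 * wiener G - transmission G u) + ((transmission G u - ((n:ℝ)-1)) * t) := by ring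
      _ = ∑ v ∈ Finset.univ.filter (fun v => v ≠ u),
            (transmission G v + ((G.dist u v : ℝ) - 1) * t) := by
          rw [Finset.sum_add_distrib, hsum_tr]
          congr 1
          rw [← Finset.sum_mul]
          congr 1
          rw [Finset.sum_sub_distrib, hsum_d, hcardR]
      _ ≤ _ := key
  · have key : ∑ v ∈ Finset.univ.filter (fun v => v ≠ u), (G.dist u v : ℝ) * transmission G v ≤
        ∑ v ∈ Finset.univ.filter (fun v => v ≠ u),
        (transmission G v + ((G.dist u v : ℝ) - 1) * T) := by
      apply Finset.sum_le_sum
      intro v hv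
      have h1 := hd1 v hv
      have h2 := hleT v
      nlinarith
    calc ∑ v ∈ Finset.univ.filter (fun v => v ≠ u), (G.dist u v : ℝ) * transmission G v
        ≤ ∑ v ∈ Finset.univ.filter (fun v => v ≠ u),
            (transmission G v + ((G.dist u v : ℝ) - 1) * T) := key
      _ = (2 * wiener G - transmission G u) + ((transmission G u - ((n:ℝ)-1)) * T) := by
          rw [Finset.sum_add_distrib, hsum_tr]
          congr 1
          rw [← Finset.sum_mul]
          congr 1
          rw [Finset.sum_sub_distrib, hsum_d, hcardR]
      _ = 2 * wiener G + (T - 1) * transmission G u - ((n : ℝ) - 1) * T := by ring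
end

section
/- Let G be a simple undirected connected graph with n ≥ 2 vertices and α ∈ [1/2, 1). Set T = max_{v∈V(G)} Tr(v) and t = min_{v∈V(G)} Tr(v), and let σ_1(G) be the largest eigenvalue of D_α(G). Then [ (1−α)(t−1) + √( (1−α)²(t−1)² + 4(α t² + 2(1−α)W(G) − (1−α)(n−1)t) ) ] / 2 ≤ σ_1(G) ≤ [ (1−α)(T−1) + √( (1−α)²(T−1)² + 4(α T² + 2(1−α)W(G) − (1−α)(n−1)T) ) ] / 2. -/
open Finset Matrix Polynomial Real

lemma rayleigh_le' {n : ℕ} {A : Matrix (Fin n) (Fin n) ℝ} (hA : A.IsHermitian) {σ : ℝ}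
    (hσ : ∀ i, hA.eigenvalues i ≤ σ) (x : Fin n → ℝ) :
    x ⬝ᵥ (A *ᵥ x) ≤ σ * (x ⬝ᵥ x) := by
  classical
  set U : Matrix (Fin n) (Fin n) ℝ := (hA.eigenvectorUnitary : Matrix (Fin n) (Fin n) ℝ) with hUdef
  have hUmem := hA.eigenvectorUnitary.2
  have hU1 : U * star U = 1 := (Matrix.mem_unitaryGroup_iff).mp hUmem
  have hstar : star U = Uᵀ := by
    rw [Matrix.star_eq_conjTranspose]
    ext i j
    simp [Matrix.conjTranspose_apply]
  have hspec : A = U * Matrix.diagonal hA.eigenvalues * star U := by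
    have := hA.spectral_theorem
    convert this using 3
    simp [Unitary.conjStarAlgAut_apply, hUdef]
  set y : Fin n → ℝ := star U *ᵥ x with hy
  have hxy : ∀ z : Fin n → ℝ, x ⬝ᵥ (U *ᵥ z) = y ⬝ᵥ z := by
    intro z
    rw [Matrix.dotProduct_mulVec, hy, hstar, Matrix.mulVec_transpose]
  have h1 : x ⬝ᵥ (A *ᵥ x) = ∑ i, hA.eigenvalues i * y i ^ 2 := by
    conv_lhs => rw [hspec]
    rw [← Matrix.mulVec_mulVec, ← Matrix.mulVec_mulVec, hxy _]
    simp only [dotProduct, Matrix.mulVec_diagonal]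
    apply Finset.sum_congr rfl
    intro i _
    ring
  have h2 : x ⬝ᵥ x = ∑ i, y i ^ 2 := by
    have : x ⬝ᵥ x = x ⬝ᵥ ((U * star U) *ᵥ x) := by rw [hU1]; simp
    rw [this, ← Matrix.mulVec_mulVec, hxy _]
    simp only [dotProduct]
    apply Finset.sum_congr rfl
    intro i _
    ring
  rw [h1, h2, Finset.mul_sum]
  apply Finset.sum_le_sum
  intro i _
  have := hσ i
  nlinarith [sq_nonneg (y i)]

set_option maxHeartbeats 1000000 in
theorem stmt_11 {n : ℕ} (hn : 2 ≤ n) (G : SimpleGraph (Fin n)) (hG : G.Connected)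
    (α : ℝ) (hα : α ∈ Set.Ico (1 / 2 : ℝ) 1)
    (hA : (alphaDistMatrix G α).IsHermitian) (σ₁ : ℝ)
    (hσ : IsGreatest (Set.range hA.eigenvalues) σ₁) :
    ((1 - α) * (sInf (Set.range (transmission G)) - 1) +
        Real.sqrt ((1 - α) ^ 2 * (sInf (Set.range (transmission G)) - 1) ^ 2 +
          4 * (α * (sInf (Set.range (transmission G))) ^ 2 + 2 * (1 - α) * wiener G -
            (1 - α) * ((n : ℝ) - 1) * sInf (Set.range (transmission G))))) / 2 ≤ σ₁ ∧
    σ₁ ≤ ((1 - α) * (sSup (Set.range (transmission G)) - 1) +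
        Real.sqrt ((1 - α) ^ 2 * (sSup (Set.range (transmission G)) - 1) ^ 2 +
          4 * (α * (sSup (Set.range (transmission G))) ^ 2 + 2 * (1 - α) * wiener G -
            (1 - α) * ((n : ℝ) - 1) * sSup (Set.range (transmission G))))) / 2 := by
  classical
  haveI : NeZero n := ⟨by omega⟩
  obtain ⟨hα1, hα2⟩ := hα
  have h1α : (0:ℝ) < 1 - α := by linarith
  have hnR : (2:ℝ) ≤ (n:ℝ) := by exact_mod_cast hn
  set Tr : Fin n → ℝ := transmission G with hTrdef
  set A : Matrix (Fin n) (Fin n) ℝ := alphaDistMatrix G α with hAdef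
  set W : ℝ := wiener G with hWdef
  -- distance facts
  have hdnn : ∀ i j : Fin n, (0:ℝ) ≤ (G.dist i j : ℝ) := fun i j => Nat.cast_nonneg _
  have hdself : ∀ i : Fin n, (G.dist i i : ℝ) = 0 := by simp
  have hd1 : ∀ i j : Fin n, i ≠ j → (1:ℝ) ≤ (G.dist i j : ℝ) := by
    intro i j hij
    have h0 : G.dist i j ≠ 0 := fun h => hij (hG.dist_eq_zero_iff.mp h)
    exact_mod_cast Nat.one_le_iff_ne_zero.mpr h0
  -- transmission facts
  have hTrnn : ∀ i, 0 ≤ Tr i := by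
    intro i
    exact Finset.sum_nonneg fun j _ => hdnn i j
  have hTrerase : ∀ i, ∑ j ∈ univ.erase i, (G.dist i j : ℝ) = Tr i := by
    intro i
    rw [hTrdef]
    unfold transmission
    rw [← Finset.add_sum_erase univ _ (mem_univ i), hdself, zero_add]
  have hTrge : ∀ i, (n:ℝ) - 1 ≤ Tr i := by
    intro i
    have h1 : ∑ j ∈ univ.erase i, (1:ℝ) ≤ ∑ j ∈ univ.erase i, (G.dist i j : ℝ) :=
      Finset.sum_le_sum fun j hj => hd1 i j (Ne.symm (Finset.mem_erase.mp hj).1)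
    have h2 : ∑ j ∈ univ.erase i, (1:ℝ) = (n:ℝ) - 1 := by
      rw [Finset.sum_const, Finset.card_erase_of_mem (mem_univ i)]
      simp [Finset.card_univ]
      rw [Nat.cast_sub (by omega)]
      simp
    rw [hTrerase i] at h1
    linarith
  -- t and T
  set t : ℝ := sInf (Set.range Tr) with htdef
  set T : ℝ := sSup (Set.range Tr) with hTdef
  have hfin : (Set.range Tr).Finite := Set.finite_range _
  have hne : (Set.range Tr).Nonempty := Set.range_nonempty _
  have ht_le : ∀ i, t ≤ Tr i := fun i => csInf_le hfin.bddBelow ⟨i, rfl⟩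
  have hle_T : ∀ i, Tr i ≤ T := fun i => le_csSup hfin.bddAbove ⟨i, rfl⟩
  obtain ⟨it, hit⟩ := hne.csInf_mem hfin
  obtain ⟨iT, hiT⟩ := hne.csSup_mem hfin
  have htge : (n:ℝ) - 1 ≤ t := by rw [htdef, ← hit]; exact hTrge it
  have hTge : (n:ℝ) - 1 ≤ T := by rw [hTdef, ← hiT]; exact hTrge iT
  have ht1 : (1:ℝ) ≤ t := by linarith
  have hT1 : (1:ℝ) ≤ T := by linarith
  have htT : t ≤ T := by rw [hTdef, ← hiT]; exact ht_le iT
  -- Wiener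
  have hW2 : ∑ i, Tr i = 2 * W := by
    rw [hTrdef, hWdef]
    unfold transmission wiener
    ring
  have hntW : (n:ℝ) * t ≤ 2 * W := by
    rw [← hW2]
    calc (n:ℝ) * t = ∑ _i : Fin n, t := by
          rw [Finset.sum_const, Finset.card_univ]; simp [nsmul_eq_mul]
      _ ≤ ∑ i, Tr i := Finset.sum_le_sum fun i _ => ht_le i
  -- matrix entry facts
  have hAoff : ∀ i j : Fin n, i ≠ j → A i j = (1 - α) * (G.dist i j : ℝ) := by
    intro i j h
    rw [hAdef]
    unfold alphaDistMatrix distMatrix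
    simp [Matrix.diagonal_apply_ne _ h]
    rfl
  have hAdiagv : ∀ i : Fin n, A i i = α * Tr i := by
    intro i
    rw [hAdef]
    unfold alphaDistMatrix distMatrix
    simp [Matrix.diagonal_apply_eq, hdself, hTrdef]
    show (1 - α) * (G.dist i i : ℝ) = 0
    simp
  have hAnn : ∀ i j : Fin n, 0 ≤ A i j := by
    intro i j
    by_cases h : i = j
    · subst h; rw [hAdiagv]; exact mul_nonneg (by linarith) (hTrnn i)
    · rw [hAoff i j h]; exact mul_nonneg (by linarith) (hdnn i j)
  have hrow : ∀ i : Fin n, ∑ j, A i j = Tr i := by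
    intro i
    rw [← Finset.add_sum_erase univ _ (mem_univ i), hAdiagv]
    have : ∑ j ∈ univ.erase i, A i j = (1 - α) * Tr i := by
      rw [← hTrerase i, Finset.mul_sum]
      exact Finset.sum_congr rfl fun j hj => hAoff i j (Ne.symm (Finset.mem_erase.mp hj).1)
    rw [this]; ring
  -- Rayleigh with the all-ones vector : 2W ≤ n σ₁
  have hray : 2 * W ≤ (n:ℝ) * σ₁ := by
    have h := rayleigh_le' hA (fun i => hσ.2 ⟨i, rfl⟩) (fun _ : Fin n => (1:ℝ))
    have hl : (fun _ : Fin n => (1:ℝ)) ⬝ᵥ (A *ᵥ (fun _ : Fin n => (1:ℝ))) = 2 * W := by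
      have e : ∀ i, ((fun j => A i j) ⬝ᵥ (fun _ : Fin n => (1:ℝ))) = Tr i := by
        intro i
        simpa [dotProduct] using hrow i
      calc (fun _ : Fin n => (1:ℝ)) ⬝ᵥ (A *ᵥ (fun _ : Fin n => (1:ℝ)))
          = ∑ i, ((fun j => A i j) ⬝ᵥ (fun _ : Fin n => (1:ℝ))) := by
            simp [dotProduct, Matrix.mulVec]
        _ = ∑ i, Tr i := Finset.sum_congr rfl fun i _ => e i
        _ = 2 * W := hW2
    have hr : (fun _ : Fin n => (1:ℝ)) ⬝ᵥ (fun _ : Fin n => (1:ℝ)) = (n:ℝ) := by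
      simp [dotProduct]
    rw [hl, hr] at h
    linarith
  have hσt : t ≤ σ₁ := by
    nlinarith
  have hσpos : (0:ℝ) < σ₁ := by linarith
  -- eigenvector
  obtain ⟨i₀, hi₀⟩ := hσ.1
  set v : Fin n → ℝ := ⇑(hA.eigenvectorBasis i₀) with hvdef
  have hv : A *ᵥ v = σ₁ • v := by
    rw [← hi₀]; exact hA.mulVec_eigenvectorBasis i₀
  have hvne : ∃ j, v j ≠ 0 := by
    by_contra h
    push_neg at h
    have h0 : hA.eigenvectorBasis i₀ = 0 := by
      ext j; exact h j
    exact hA.eigenvectorBasis.orthonormal.ne_zero i₀ h0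
  obtain ⟨p, _, hp⟩ := Finset.exists_max_image univ (fun j => |v j|) ⟨i₀, mem_univ i₀⟩
  have hp' : ∀ j, |v j| ≤ |v p| := fun j => hp j (mem_univ j)
  have hvp : 0 < |v p| := by
    obtain ⟨j, hj⟩ := hvne
    exact lt_of_lt_of_le (abs_pos.mpr hj) (hp' j)
  -- key eigenvector identities
  have hmvk : ∀ k, σ₁ * v k = ∑ j, A k j * v j := by
    intro k
    have := congrFun hv k
    simpa [Matrix.mulVec, dotProduct] using this.symm
  have hAvk : ∀ k, |σ₁ * v k| ≤ |v p| * Tr k := by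
    intro k
    rw [hmvk k]
    calc |∑ j, A k j * v j| ≤ ∑ j, |A k j * v j| := Finset.abs_sum_le_sum_abs _ _
      _ ≤ ∑ j, A k j * |v p| := by
          apply Finset.sum_le_sum
          intro j _
          rw [abs_mul, abs_of_nonneg (hAnn k j)]
          exact mul_le_mul_of_nonneg_left (hp' j) (hAnn k j)
      _ = |v p| * Tr k := by rw [← Finset.sum_mul, hrow]; ring
  -- σ₁ ≤ T
  have hσT : σ₁ ≤ T := by
    have h := hAvk p
    rw [abs_mul, abs_of_nonneg hσpos.le] at h
    have h2 : σ₁ * |v p| ≤ T * |v p| := by nlinarith [hle_T p, hvp.le]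
    exact le_of_mul_le_mul_right h2 hvp
  -- quadratic inequality
  have hq1 : σ₁ ^ 2 * |v p| ≤
      (α * Tr p * σ₁ + (1 - α) * ∑ k ∈ univ.erase p, (G.dist p k : ℝ) * Tr k) * |v p| := by
    have e1 : σ₁ ^ 2 * v p = ∑ j, A p j * (σ₁ * v j) := by
      calc σ₁ ^ 2 * v p = σ₁ * (σ₁ * v p) := by ring
        _ = σ₁ * ∑ j, A p j * v j := by rw [hmvk p]
        _ = ∑ j, A p j * (σ₁ * v j) := by
            rw [Finset.mul_sum]; exact Finset.sum_congr rfl fun j _ => by ring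
    have e2 : σ₁ ^ 2 * |v p| = |σ₁ ^ 2 * v p| := by
      rw [abs_mul, abs_of_nonneg (sq_nonneg σ₁)]
    rw [e2, e1]
    calc |∑ j, A p j * (σ₁ * v j)| ≤ ∑ j, |A p j * (σ₁ * v j)| :=
          Finset.abs_sum_le_sum_abs _ _
      _ = A p p * |σ₁ * v p| + ∑ j ∈ univ.erase p, |A p j * (σ₁ * v j)| := by
          rw [← Finset.add_sum_erase univ _ (mem_univ p), abs_mul,
            abs_of_nonneg (hAnn p p)]
      _ ≤ α * Tr p * (σ₁ * |v p|) + ∑ j ∈ univ.erase p, (1 - α) * (G.dist p j : ℝ) * (|v p| * Tr j) := by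
          apply add_le_add
          · rw [hAdiagv p, abs_mul, abs_of_nonneg hσpos.le]
          · apply Finset.sum_le_sum
            intro j hj
            have hjp : p ≠ j := Ne.symm (Finset.mem_erase.mp hj).1
            rw [abs_mul, abs_of_nonneg (hAnn p j), hAoff p j hjp]
            have h1 := hAvk j
            have h2 : 0 ≤ (1 - α) * (G.dist p j : ℝ) :=
              mul_nonneg (by linarith) (hdnn p j)
            nlinarith
      _ = (α * Tr p * σ₁ + (1 - α) * ∑ k ∈ univ.erase p, (G.dist p k : ℝ) * Tr k) * |v p| := by
          simp only [add_mul, Finset.mul_sum, Finset.sum_mul]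
          congr 1
          · ring
          · exact Finset.sum_congr rfl fun j _ => by ring
  have hq2 : σ₁ ^ 2 ≤ α * Tr p * σ₁ + (1 - α) * ∑ k ∈ univ.erase p, (G.dist p k : ℝ) * Tr k :=
    le_of_mul_le_mul_right hq1 hvp
  -- bound the sum
  have hS : ∑ k ∈ univ.erase p, (G.dist p k : ℝ) * Tr k ≤
      (Tr p - ((n:ℝ) - 1)) * T + (2 * W - Tr p) := by
    have e1 : ∑ k ∈ univ.erase p, (G.dist p k : ℝ) * Tr k =
        ∑ k ∈ univ.erase p, ((G.dist p k : ℝ) - 1) * Tr k + ∑ k ∈ univ.erase p, Tr k := by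
      rw [← Finset.sum_add_distrib]
      exact Finset.sum_congr rfl fun k _ => by ring
    have e2 : ∑ k ∈ univ.erase p, Tr k = 2 * W - Tr p := by
      rw [Finset.sum_erase_eq_sub (mem_univ p), hW2]
    have e3 : ∑ k ∈ univ.erase p, ((G.dist p k : ℝ) - 1) * Tr k ≤
        ∑ k ∈ univ.erase p, ((G.dist p k : ℝ) - 1) * T := by
      apply Finset.sum_le_sum
      intro k hk
      have hpk : p ≠ k := Ne.symm (Finset.mem_erase.mp hk).1
      have := hd1 p k hpk
      have := hle_T k
      nlinarith
    have e4 : ∑ k ∈ univ.erase p, ((G.dist p k : ℝ) - 1) * T = (Tr p - ((n:ℝ) - 1)) * T := by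
      have hc : (((univ.erase p).card : ℕ) : ℝ) = (n:ℝ) - 1 := by
        rw [Finset.card_erase_of_mem (mem_univ p), Finset.card_univ, Fintype.card_fin,
          Nat.cast_sub (by omega), Nat.cast_one]
      have hsum : ∑ k ∈ univ.erase p, ((G.dist p k : ℝ) - 1) = Tr p - ((n:ℝ) - 1) := by
        rw [Finset.sum_sub_distrib, hTrerase p, Finset.sum_const, nsmul_eq_mul, hc, mul_one]
      rw [← Finset.sum_mul, hsum]
    rw [e1, e2]
    linarith [e3.trans_eq e4]
  -- main quadratic inequality (upper)
  have hquadU : σ₁ ^ 2 ≤ (1 - α) * (T - 1) * σ₁ +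
      (α * T ^ 2 + 2 * (1 - α) * W - (1 - α) * ((n:ℝ) - 1) * T) := by
    have hTrpT := hle_T p
    have hTrpt := ht_le p
    have h1 : σ₁ ^ 2 ≤ α * Tr p * σ₁ + (1 - α) * ((Tr p - ((n:ℝ) - 1)) * T + (2 * W - Tr p)) := by
      have := mul_le_mul_of_nonneg_left hS (by linarith : (0:ℝ) ≤ 1 - α)
      linarith
    have e5 : (0:ℝ) ≤ (T - Tr p) * (α * σ₁ + (1 - α) * (T - 1)) := by
      apply mul_nonneg (by linarith)
      have : (0:ℝ) ≤ α * σ₁ := mul_nonneg (by linarith) hσpos.le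
      nlinarith
    have e6 : (0:ℝ) ≤ (T - σ₁) * ((2*α - 1) * T + (1 - α)) := by
      apply mul_nonneg (by linarith)
      nlinarith
    nlinarith [e5, e6, h1]
  -- main quadratic inequality (lower)
  have hquadL : (1 - α) * (t - 1) * σ₁ +
      (α * t ^ 2 + 2 * (1 - α) * W - (1 - α) * ((n:ℝ) - 1) * t) ≤ σ₁ ^ 2 := by
    have h1 : (0:ℝ) ≤ σ₁ - t := by linarith
    have hprod : (0:ℝ) ≤ (α - 1/2) * (t + (n:ℝ) - 1) := by
      apply mul_nonneg <;> linarith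
    have h2 : (0:ℝ) ≤ σ₁ + t - (1 - α) * (t - 1) - (1 - α) * (n:ℝ) := by nlinarith
    have h3 := mul_nonneg h1 h2
    have h4 : (0:ℝ) ≤ (1 - α) * ((n:ℝ) * σ₁ - 2 * W) := by
      apply mul_nonneg <;> linarith
    nlinarith
  constructor
  · -- lower bound
    set b : ℝ := (1 - α) * (t - 1) with hbdef
    set c : ℝ := α * t ^ 2 + 2 * (1 - α) * W - (1 - α) * ((n:ℝ) - 1) * t with hcdef
    have hb : 0 ≤ 2 * σ₁ - b := by
      have : b ≤ t - 1 := by nlinarith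
      linarith
    have hsq : (1 - α) ^ 2 * (t - 1) ^ 2 + 4 * c ≤ (2 * σ₁ - b) ^ 2 := by
      have hbb : (1 - α) ^ 2 * (t - 1) ^ 2 = b ^ 2 := by rw [hbdef]; ring
      rw [hbb]
      nlinarith [hquadL]
    have := Real.sqrt_le_sqrt hsq
    rw [Real.sqrt_sq hb] at this
    linarith
  · -- upper bound
    set b : ℝ := (1 - α) * (T - 1) with hbdef
    set c : ℝ := α * T ^ 2 + 2 * (1 - α) * W - (1 - α) * ((n:ℝ) - 1) * T with hcdef
    have hsq : (2 * σ₁ - b) ^ 2 ≤ (1 - α) ^ 2 * (T - 1) ^ 2 + 4 * c := by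
      have hbb : (1 - α) ^ 2 * (T - 1) ^ 2 = b ^ 2 := by rw [hbdef]; ring
      rw [hbb]
      nlinarith [hquadU]
    have h1 : 2 * σ₁ - b ≤ Real.sqrt ((1 - α) ^ 2 * (T - 1) ^ 2 + 4 * c) := by
      calc 2 * σ₁ - b ≤ |2 * σ₁ - b| := le_abs_self _
        _ = Real.sqrt ((2 * σ₁ - b) ^ 2) := (Real.sqrt_sq_eq_abs _).symm
        _ ≤ _ := Real.sqrt_le_sqrt hsq
    linarith
end

section
/- Let G be a simple undirected connected graph with n ≥ 2 vertices and α ∈ [0,1]. Let σ_1(G) and σ_n(G) be the largest and smallest eigenvalues of D_α(G). Then for every vertex v_i of G: σ_1(G) − σ_n(G) ≥ √( (2W(G) + (αn − 2)Tr(v_i))² − 4(n−1)(2α·Tr(v_i)·W(G) − Tr(v_i)²) ) / (n−1). -/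
open Finset Matrix Polynomial Real

/-- Rayleigh quotient bounds for a real symmetric matrix. -/
lemma aux_rayleigh {n : ℕ} {A : Matrix (Fin n) (Fin n) ℝ} (hA : A.IsHermitian)
    {p q : ℝ} (hp : ∀ k, hA.eigenvalues k ≤ p) (hq : ∀ k, q ≤ hA.eigenvalues k)
    (x : Fin n → ℝ) :
    q * (x ⬝ᵥ x) ≤ x ⬝ᵥ (A *ᵥ x) ∧ x ⬝ᵥ (A *ᵥ x) ≤ p * (x ⬝ᵥ x) := by
  classical
  set U : Matrix (Fin n) (Fin n) ℝ := (hA.eigenvectorUnitary : Matrix (Fin n) (Fin n) ℝ) with hU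
  set y : Fin n → ℝ := star U *ᵥ x with hy
  have hkey : x ᵥ* U = y := by
    rw [hy, Matrix.star_eq_conjTranspose, Matrix.conjTranspose_eq_transpose_of_trivial,
      Matrix.mulVec_transpose]
  have hAx : x ⬝ᵥ (A *ᵥ x) = ∑ k, hA.eigenvalues k * (y k) ^ 2 := by
    conv_lhs => rw [hA.spectral_theorem]
    rw [Unitary.conjStarAlgAut_apply]
    rw [← Matrix.mulVec_mulVec, ← Matrix.mulVec_mulVec, Matrix.dotProduct_mulVec, hkey, ← hy]
    simp only [Matrix.mulVec_diagonal, dotProduct, Function.comp_apply,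
      RCLike.ofReal_real_eq_id, id_eq]
    exact Finset.sum_congr rfl fun k _ => by ring
  have hxx : x ⬝ᵥ x = ∑ k, (y k) ^ 2 := by
    have h1 : U * star U = 1 := (Matrix.mem_unitaryGroup_iff).mp (hA.eigenvectorUnitary).2
    calc x ⬝ᵥ x = x ⬝ᵥ ((U * star U) *ᵥ x) := by rw [h1, Matrix.one_mulVec]
    _ = ∑ k, (y k) ^ 2 := by
        rw [← Matrix.mulVec_mulVec, Matrix.dotProduct_mulVec, hkey, ← hy]
        simp only [dotProduct]
        exact Finset.sum_congr rfl fun k _ => by ring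
  constructor
  · rw [hAx, hxx, Finset.mul_sum]
    exact Finset.sum_le_sum fun k _ => by nlinarith [hq k, sq_nonneg (y k)]
  · rw [hAx, hxx, Finset.mul_sum]
    exact Finset.sum_le_sum fun k _ => by nlinarith [hp k, sq_nonneg (y k)]

/-- Discriminant bound for a nonnegative binary quadratic form. -/
lemma aux_discrim {c₁ c₂ b : ℝ}
    (h : ∀ y₁ y₂ : ℝ, 0 ≤ c₁ * y₁ ^ 2 + 2 * b * y₁ * y₂ + c₂ * y₂ ^ 2) :
    b ^ 2 ≤ c₁ * c₂ := by
  have hc₁ : 0 ≤ c₁ := by have := h 1 0; nlinarith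
  have hc₂ : 0 ≤ c₂ := by have := h 0 1; nlinarith
  by_cases hb : b = 0
  · simpa [hb] using mul_nonneg hc₁ hc₂
  rcases hc₁.lt_or_eq with h₁ | h₁
  · have := h (-b) c₁
    nlinarith
  · exfalso
    have h2 := h (-(c₂ + 1) / (2 * b)) 1
    rw [← h₁] at h2
    have hb2 : (2 * b) ≠ 0 := by simpa using hb
    field_simp at h2
    have hb3 : 0 < b ^ 2 := lt_of_le_of_ne (sq_nonneg b) (Ne.symm (pow_ne_zero 2 hb))
    rw [le_div_iff₀ hb3] at h2
    nlinarith [h2, hb3]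

/-- Core algebraic inequality. -/
lemma aux_core {m a b S p q : ℝ} (hm : 0 < m) (ha1 : q ≤ a) (ha2 : a ≤ p)
    (hS1 : m * q ≤ S) (hS2 : S ≤ m * p) (hb1 : b ^ 2 ≤ (a - q) * (S - m * q))
    (hb2 : b ^ 2 ≤ (p - a) * (m * p - S)) :
    (m * a - S) ^ 2 + 4 * m * b ^ 2 ≤ (m * (p - q)) ^ 2 := by
  set E := m * a - S with hE
  set P := m * (p - q) with hP
  have hPE1 : 0 ≤ P + E := by rw [hE, hP]; nlinarith
  have hPE2 : 0 ≤ P - E := by rw [hE, hP]; nlinarith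
  have h1 : 4 * m * ((a - q) * (m * p - S)) ≤ (P + E) ^ 2 := by
    rw [hE, hP]; nlinarith [sq_nonneg (m * (a - q) - (m * p - S))]
  have h2 : 4 * m * ((p - a) * (S - m * q)) ≤ (P - E) ^ 2 := by
    rw [hE, hP]; nlinarith [sq_nonneg (m * (p - a) - (S - m * q))]
  have hX1 : 0 ≤ (a - q) * (S - m * q) := mul_nonneg (by linarith) (by linarith)
  have hX2 : 0 ≤ (p - a) * (m * p - S) := mul_nonneg (by linarith) (by linarith)
  have h2n : 0 ≤ 4 * m * ((p - a) * (S - m * q)) := by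
    have : 0 ≤ (p - a) * (S - m * q) := mul_nonneg (by linarith) (by linarith)
    nlinarith
  have hbb : b ^ 2 * b ^ 2 ≤ ((a - q) * (S - m * q)) * ((p - a) * (m * p - S)) :=
    mul_le_mul hb1 hb2 (sq_nonneg b) hX1
  have hprod : (4 * m * ((a - q) * (m * p - S))) * (4 * m * ((p - a) * (S - m * q)))
      ≤ (P + E) ^ 2 * (P - E) ^ 2 :=
    mul_le_mul h1 h2 h2n (sq_nonneg _)
  have hch : (4 * m * b ^ 2) ^ 2 ≤ ((P + E) * (P - E)) ^ 2 := by
    have e1 : (4 * m * b ^ 2) ^ 2 = (4 * m) ^ 2 * (b ^ 2 * b ^ 2) := by ring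
    have e2 : (4 * m) ^ 2 * (((a - q) * (S - m * q)) * ((p - a) * (m * p - S)))
        = (4 * m * ((a - q) * (m * p - S))) * (4 * m * ((p - a) * (S - m * q))) := by ring
    have e3 : ((P + E) * (P - E)) ^ 2 = (P + E) ^ 2 * (P - E) ^ 2 := by ring
    have h4 : (4 * m) ^ 2 * (b ^ 2 * b ^ 2)
        ≤ (4 * m) ^ 2 * (((a - q) * (S - m * q)) * ((p - a) * (m * p - S))) :=
      mul_le_mul_of_nonneg_left hbb (by positivity)
    rw [e1, e3]
    calc (4 * m) ^ 2 * (b ^ 2 * b ^ 2)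
        ≤ (4 * m) ^ 2 * (((a - q) * (S - m * q)) * ((p - a) * (m * p - S))) := h4
      _ = (4 * m * ((a - q) * (m * p - S))) * (4 * m * ((p - a) * (S - m * q))) := e2
      _ ≤ (P + E) ^ 2 * (P - E) ^ 2 := hprod
  have hmb : 0 ≤ 4 * m * b ^ 2 := by positivity
  have hPEprod : 0 ≤ (P + E) * (P - E) := mul_nonneg hPE1 hPE2
  have hfin : 4 * m * b ^ 2 ≤ (P + E) * (P - E) := by
    have := Real.sqrt_le_sqrt hch
    rwa [Real.sqrt_sq hmb, Real.sqrt_sq hPEprod] at this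
  nlinarith [hfin]

theorem stmt_13 {n : ℕ} (hn : 2 ≤ n) (G : SimpleGraph (Fin n)) (hG : G.Connected)
    (α : ℝ) (hα : α ∈ Set.Icc (0 : ℝ) 1)
    (hA : (alphaDistMatrix G α).IsHermitian) (σ₁ σₙ : ℝ)
    (hσ₁ : IsGreatest (Set.range hA.eigenvalues) σ₁)
    (hσₙ : IsLeast (Set.range hA.eigenvalues) σₙ) (i : Fin n) :
    Real.sqrt ((2 * wiener G + (α * (n : ℝ) - 2) * transmission G i) ^ 2 -
        4 * ((n : ℝ) - 1) *
          (2 * α * transmission G i * wiener G - (transmission G i) ^ 2)) / ((n : ℝ) - 1) ≤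
      σ₁ - σₙ := by
  classical
  have hp : ∀ k, hA.eigenvalues k ≤ σ₁ := fun k => hσ₁.2 (Set.mem_range_self k)
  have hq : ∀ k, σₙ ≤ hA.eigenvalues k := fun k => hσₙ.2 (Set.mem_range_self k)
  have hpq : σₙ ≤ σ₁ := by
    have h0 : (0 : ℕ) < n := by omega
    exact le_trans (hq ⟨0, h0⟩) (hp ⟨0, h0⟩)
  set T := transmission G i with hT
  set W := wiener G with hW
  set m : ℝ := (n : ℝ) - 1 with hm
  have hm0 : 0 < m := by
    rw [hm]
    have : (2 : ℝ) ≤ (n : ℝ) := by exact_mod_cast hn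
    linarith
  -- total transmission = 2 W
  have h2W : ∑ j, transmission G j = 2 * W := by
    rw [hW]; simp only [transmission, wiener]; ring
  have hdii : (G.dist i i : ℝ) = 0 := by simp
  have hdcol : ∑ j, (G.dist j i : ℝ) = T := by
    rw [hT]
    simp only [transmission]
    exact Finset.sum_congr rfl fun j _ => by rw [SimpleGraph.dist_comm]
  -- quadratic form and norm of the test vector
  have hNform : ∀ y₁ y₂ : ℝ,
      (fun j => if j = i then y₁ else y₂) ⬝ᵥ (fun j => if j = i then y₁ else y₂)
        = y₁ ^ 2 + m * y₂ ^ 2 := by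
    intro y₁ y₂
    have : ∀ j : Fin n, (if j = i then y₁ else y₂) * (if j = i then y₁ else y₂)
        = y₂ ^ 2 + (if j = i then y₁ ^ 2 - y₂ ^ 2 else 0) := by
      intro j; by_cases h : j = i <;> simp [h] <;> ring
    simp only [dotProduct, this, Finset.sum_add_distrib, Finset.sum_const,
      Finset.sum_ite_eq', Finset.mem_univ, if_true, Finset.card_univ, Fintype.card_fin,
      nsmul_eq_mul]
    have hc : ((n : ℝ)) = m + 1 := by rw [hm]; ring
    rw [hc]; ring
  have hQform : ∀ y₁ y₂ : ℝ,
      (fun j => if j = i then y₁ else y₂) ⬝ᵥ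
          (alphaDistMatrix G α *ᵥ fun j => if j = i then y₁ else y₂)
        = (α * T) * y₁ ^ 2 + 2 * ((1 - α) * T) * y₁ * y₂
            + (2 * W - (2 - α) * T) * y₂ ^ 2 := by
    intro y₁ y₂
    set x : Fin n → ℝ := fun j => if j = i then y₁ else y₂ with hx
    have hxi : x i = y₁ := by simp [hx]
    have hexp : x ⬝ᵥ (alphaDistMatrix G α *ᵥ x)
        = α * (∑ j, transmission G j * (x j) ^ 2)
          + (1 - α) * (∑ j, ∑ k, (G.dist j k : ℝ) * x j * x k) := by
      simp only [alphaDistMatrix, distMatrix, dotProduct, Matrix.mulVec,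
        Matrix.add_apply, Matrix.smul_apply, smul_eq_mul, dotProduct,
        Matrix.diagonal_apply]
      rw [Finset.mul_sum, Finset.mul_sum, ← Finset.sum_add_distrib]
      refine Finset.sum_congr rfl fun j _ => ?_
      have h1 : (∑ k, ((α * if j = k then transmission G j else 0)
            + (1 - α) * (G.dist j k : ℝ)) * x k)
          = α * (transmission G j * x j) + (1 - α) * ∑ k, (G.dist j k : ℝ) * x k := by
        have h2 : ∀ k : Fin n, ((α * if j = k then transmission G j else 0)
              + (1 - α) * (G.dist j k : ℝ)) * x k
            = (if j = k then α * (transmission G j * x k) else 0)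
              + (1 - α) * ((G.dist j k : ℝ) * x k) := by
          intro k; by_cases h : j = k <;> simp [h] <;> ring
        rw [Finset.sum_congr rfl fun k _ => h2 k, Finset.sum_add_distrib, Finset.sum_ite_eq,
          if_pos (Finset.mem_univ j), ← Finset.mul_sum]
      rw [h1]
      have h5 : ∑ k, (G.dist j k : ℝ) * x j * x k = x j * ∑ k, (G.dist j k : ℝ) * x k := by
        rw [Finset.mul_sum]; exact Finset.sum_congr rfl fun k _ => by ring
      rw [h5]; ring
    -- the diagonal part
    have hdiagsum : ∑ j, transmission G j * (x j) ^ 2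
        = 2 * W * y₂ ^ 2 + T * (y₁ ^ 2 - y₂ ^ 2) := by
      have h3 : ∀ j : Fin n, transmission G j * (x j) ^ 2
          = transmission G j * y₂ ^ 2
            + (if j = i then transmission G j * (y₁ ^ 2 - y₂ ^ 2) else 0) := by
        intro j; by_cases h : j = i <;> simp [hx, h] <;> ring
      rw [Finset.sum_congr rfl fun j _ => h3 j, Finset.sum_add_distrib,
        Finset.sum_ite_eq', if_pos (Finset.mem_univ i), ← Finset.sum_mul, h2W, ← hT]
    -- the distance part
    have hdistsum : ∑ j, ∑ k, (G.dist j k : ℝ) * x j * x k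
        = 2 * W * y₂ ^ 2 + 2 * T * (y₁ - y₂) * y₂ := by
      have h4 : ∀ j k : Fin n, (G.dist j k : ℝ) * x j * x k
          = (G.dist j k : ℝ) * y₂ ^ 2
            + (if j = i then (G.dist j k : ℝ) * ((y₁ - y₂) * y₂) else 0)
            + (if k = i then (G.dist j k : ℝ) * (y₂ * (y₁ - y₂)) else 0)
            + (if j = i then (if k = i then (G.dist j k : ℝ) * (y₁ - y₂) ^ 2 else 0) else 0) := by
        intro j k
        by_cases h : j = i <;> by_cases h' : k = i <;> simp [hx, h, h'] <;> ring
      rw [Finset.sum_congr rfl fun j _ => Finset.sum_congr rfl fun k _ => h4 j k]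
      simp only [Finset.sum_add_distrib]
      have e1 : ∑ j : Fin n, ∑ k : Fin n, (G.dist j k : ℝ) * y₂ ^ 2 = 2 * W * y₂ ^ 2 := by
        have h2Wd : ∑ j : Fin n, ∑ k : Fin n, (G.dist j k : ℝ) = 2 * W := by
          rw [hW]; simp only [wiener]; ring
        simp only [← Finset.sum_mul]
        rw [h2Wd]
      have e2 : ∑ j : Fin n, ∑ k : Fin n,
          (if j = i then (G.dist j k : ℝ) * ((y₁ - y₂) * y₂) else 0)
          = T * ((y₁ - y₂) * y₂) := by
        have : ∀ j : Fin n, ∑ k : Fin n,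
            (if j = i then (G.dist j k : ℝ) * ((y₁ - y₂) * y₂) else 0)
            = if j = i then transmission G j * ((y₁ - y₂) * y₂) else 0 := by
          intro j
          by_cases h : j = i
          · simp only [h, if_true, ← Finset.sum_mul, transmission]
          · simp [h]
        rw [Finset.sum_congr rfl fun j _ => this j, Finset.sum_ite_eq', if_pos (Finset.mem_univ i), ← hT]
      have e3 : ∑ j : Fin n, ∑ k : Fin n,
          (if k = i then (G.dist j k : ℝ) * (y₂ * (y₁ - y₂)) else 0)
          = T * (y₂ * (y₁ - y₂)) := by
        have : ∀ j : Fin n, ∑ k : Fin n,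
            (if k = i then (G.dist j k : ℝ) * (y₂ * (y₁ - y₂)) else 0)
            = (G.dist j i : ℝ) * (y₂ * (y₁ - y₂)) := by
          intro j
          rw [Finset.sum_ite_eq', if_pos (Finset.mem_univ i)]
        rw [Finset.sum_congr rfl fun j _ => this j, ← Finset.sum_mul, hdcol]
      have e4 : ∑ j : Fin n, ∑ k : Fin n,
          (if j = i then (if k = i then (G.dist j k : ℝ) * (y₁ - y₂) ^ 2 else 0) else 0)
          = 0 := by
        have : ∀ j : Fin n, ∑ k : Fin n,
            (if j = i then (if k = i then (G.dist j k : ℝ) * (y₁ - y₂) ^ 2 else 0) else 0)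
            = if j = i then (G.dist j i : ℝ) * (y₁ - y₂) ^ 2 else 0 := by
          intro j
          by_cases h : j = i
          · simp only [h, if_true]
            rw [Finset.sum_ite_eq', if_pos (Finset.mem_univ i)]
          · simp [h]
        rw [Finset.sum_congr rfl fun j _ => this j, Finset.sum_ite_eq', if_pos (Finset.mem_univ i), hdii]
        ring
      rw [e1, e2, e3, e4]
      ring
    rw [hexp, hdiagsum, hdistsum]
    ring
  -- Rayleigh instantiations
  have hray : ∀ y₁ y₂ : ℝ,
      σₙ * (y₁ ^ 2 + m * y₂ ^ 2) ≤ (α * T) * y₁ ^ 2 + 2 * ((1 - α) * T) * y₁ * y₂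
          + (2 * W - (2 - α) * T) * y₂ ^ 2
        ∧ (α * T) * y₁ ^ 2 + 2 * ((1 - α) * T) * y₁ * y₂
          + (2 * W - (2 - α) * T) * y₂ ^ 2 ≤ σ₁ * (y₁ ^ 2 + m * y₂ ^ 2) := by
    intro y₁ y₂
    have := aux_rayleigh hA hp hq (fun j => if j = i then y₁ else y₂)
    rwa [hQform y₁ y₂, hNform y₁ y₂] at this
  set a := α * T with ha
  set b := (1 - α) * T with hb
  set S := 2 * W - (2 - α) * T with hS
  have ha1 : σₙ ≤ a := by have := (hray 1 0).1; nlinarith [this]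
  have ha2 : a ≤ σ₁ := by have := (hray 1 0).2; nlinarith [this]
  have hS1 : m * σₙ ≤ S := by have := (hray 0 1).1; nlinarith [this]
  have hS2 : S ≤ m * σ₁ := by have := (hray 0 1).2; nlinarith [this]
  have hb1 : b ^ 2 ≤ (a - σₙ) * (S - m * σₙ) := by
    apply aux_discrim
    intro y₁ y₂
    have := (hray y₁ y₂).1
    nlinarith [this]
  have hb2 : (-b) ^ 2 ≤ (σ₁ - a) * (m * σ₁ - S) := by
    apply aux_discrim
    intro y₁ y₂
    have := (hray y₁ y₂).2
    nlinarith [this]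
  have hb2' : b ^ 2 ≤ (σ₁ - a) * (m * σ₁ - S) := by
    calc b ^ 2 = (-b) ^ 2 := by ring
    _ ≤ _ := hb2
  have hcore : (m * a - S) ^ 2 + 4 * m * b ^ 2 ≤ (m * (σ₁ - σₙ)) ^ 2 :=
    aux_core hm0 ha1 ha2 hS1 hS2 hb1 hb2'
  -- identify radicand
  have hrad : (2 * W + (α * (n : ℝ) - 2) * T) ^ 2 - 4 * m * (2 * α * T * W - T ^ 2)
      = (m * a - S) ^ 2 + 4 * m * b ^ 2 := by
    rw [ha, hb, hS, hm]; ring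
  rw [div_le_iff₀ hm0]
  calc Real.sqrt ((2 * W + (α * (n : ℝ) - 2) * T) ^ 2 - 4 * m * (2 * α * T * W - T ^ 2))
      = Real.sqrt ((m * a - S) ^ 2 + 4 * m * b ^ 2) := by rw [hrad]
    _ ≤ Real.sqrt ((m * (σ₁ - σₙ)) ^ 2) := Real.sqrt_le_sqrt hcore
    _ = m * (σ₁ - σₙ) := Real.sqrt_sq (by nlinarith [hm0, hpq])
    _ = (σ₁ - σₙ) * m := by ring
end

section
/- Let G be a simple undirected connected graph with n ≥ 2 vertices and α ∈ [0,1]. Then the α-distance Estrada index satisfies DEE_α(G) ≤ n + 2αW(G) − 1 − ω + e^ω, where ω = √( α² Σ_{i=1}^n Tr(v_i)² + 2(1−α)² S ) and S = Σ_{1≤i<j≤n} d(v_i,v_j)². -/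
open Finset Matrix Polynomial Real

open Nat in
/-- The exponential remainder `e^t - 1 - t` as a power series. -/
lemma remainder_eq (t : ℝ) : Real.exp t - 1 - t = ∑' k : ℕ, t ^ (k + 2) / (k + 2)! := by
  have hs := Real.summable_pow_div_factorial t
  have h := Summable.sum_add_tsum_nat_add (f := fun n => t ^ n / n !) 2 hs
  have he : Real.exp t = ∑' n : ℕ, t ^ n / n ! := by
    rw [Real.exp_eq_exp_ℝ, NormedSpace.exp_eq_tsum_div]
  rw [he, ← h]
  simp [Finset.sum_range_succ]
  ring

lemma exp_le_abs (x : ℝ) : Real.exp x ≤ 1 + x + (Real.exp |x| - 1 - |x|) := by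
  rcases le_or_gt 0 x with h | h
  · rw [abs_of_nonneg h]; linarith
  · rw [abs_of_neg h]
    have hs : Real.sinh x < x := Real.sinh_lt_self_iff.2 h
    rw [Real.sinh_eq] at hs
    linarith

open Nat in
/-- Superadditivity of the exponential remainder along an ℓ² bound. -/
lemma sum_remainder_le {n : ℕ} (c : Fin n → ℝ) (hc : ∀ i, 0 ≤ c i) (ω : ℝ) (hω : 0 ≤ ω)
    (hsum : ∑ i, c i ^ 2 ≤ ω ^ 2) :
    ∑ i, (Real.exp (c i) - 1 - c i) ≤ Real.exp ω - 1 - ω := by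
  have hcle : ∀ i, c i ≤ ω := by
    intro i
    have h1 : c i ^ 2 ≤ ω ^ 2 := le_trans (Finset.single_le_sum (f := fun i => c i ^ 2)
      (fun i _ => sq_nonneg _) (mem_univ i)) hsum
    exact (pow_le_pow_iff_left₀ (hc i) hω two_ne_zero).1 h1
  have hsumm : ∀ (t : ℝ), Summable (fun k : ℕ => t ^ (k + 2) / (k + 2)!) := fun t =>
    (summable_nat_add_iff 2).2 (Real.summable_pow_div_factorial t)
  calc ∑ i, (Real.exp (c i) - 1 - c i)
      = ∑ i, ∑' k : ℕ, (c i) ^ (k + 2) / (k + 2)! :=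
        Finset.sum_congr rfl fun i _ => remainder_eq (c i)
    _ = ∑' k : ℕ, ∑ i, (c i) ^ (k + 2) / (k + 2)! :=
        (Summable.tsum_finsetSum (fun i _ => hsumm (c i))).symm
    _ ≤ ∑' k : ℕ, ω ^ (k + 2) / (k + 2)! := by
        refine Summable.tsum_le_tsum (fun k => ?_) ?_ (hsumm ω)
        · rw [← Finset.sum_div]
          apply div_le_div_of_nonneg_right ?_ (by positivity) |>.trans_eq rfl
          calc ∑ i, c i ^ (k + 2) ≤ ∑ i, ω ^ k * c i ^ 2 := by
                refine Finset.sum_le_sum fun i _ => ?_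
                have h2 : c i ^ (k + 2) = c i ^ k * c i ^ 2 := by ring
                rw [h2]
                exact mul_le_mul_of_nonneg_right (pow_le_pow_left₀ (hc i) (hcle i) k)
                  (sq_nonneg _)
            _ = ω ^ k * ∑ i, c i ^ 2 := by rw [Finset.mul_sum]
            _ ≤ ω ^ k * ω ^ 2 := mul_le_mul_of_nonneg_left hsum (pow_nonneg hω k)
            _ = ω ^ (k + 2) := by ring
        · exact (summable_sum (fun i _ => hsumm (c i)))
    _ = Real.exp ω - 1 - ω := (remainder_eq ω).symm

lemma trace_eq_sum_eigen {n : ℕ} {A : Matrix (Fin n) (Fin n) ℝ} (hA : A.IsHermitian) :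
    A.trace = ∑ i, hA.eigenvalues i := by
  have hV : star (hA.eigenvectorUnitary : Matrix (Fin n) (Fin n) ℝ)
      * (hA.eigenvectorUnitary : Matrix (Fin n) (Fin n) ℝ) = 1 :=
    Matrix.UnitaryGroup.star_mul_self _
  conv_lhs => rw [hA.spectral_theorem, Unitary.conjStarAlgAut_apply]
  rw [Matrix.trace_mul_cycle, hV, Matrix.one_mul, Matrix.trace_diagonal]
  simp [RCLike.ofReal_real_eq_id]

lemma trace_sq_eq_sum_eigen {n : ℕ} {A : Matrix (Fin n) (Fin n) ℝ} (hA : A.IsHermitian) :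
    (A * A).trace = ∑ i, hA.eigenvalues i ^ 2 := by
  set V : Matrix (Fin n) (Fin n) ℝ := (hA.eigenvectorUnitary : Matrix (Fin n) (Fin n) ℝ) with hVdef
  set D : Matrix (Fin n) (Fin n) ℝ := diagonal (RCLike.ofReal ∘ hA.eigenvalues) with hDdef
  have hV : star V * V = 1 := Matrix.UnitaryGroup.star_mul_self _
  have hV' : ∀ X : Matrix (Fin n) (Fin n) ℝ, star V * (V * X) = X := fun X => by
    rw [← Matrix.mul_assoc, hV, Matrix.one_mul]
  have h : A = V * D * star V := hA.spectral_theorem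
  have h2 : A * A = V * (D * D) * star V := by
    rw [h]; simp only [Matrix.mul_assoc]; rw [hV' (D * star V)]
  rw [h2, Matrix.trace_mul_cycle, hV, Matrix.one_mul]
  rw [hDdef, Matrix.diagonal_mul_diagonal, Matrix.trace_diagonal]
  simp [RCLike.ofReal_real_eq_id, sq]

lemma double_sum_eq {n : ℕ} (f : Fin n × Fin n → ℝ) (hdiag : ∀ i, f (i, i) = 0)
    (hsymm : ∀ p : Fin n × Fin n, f p = f (p.2, p.1)) :
    ∑ p : Fin n × Fin n, f p
      = 2 * ∑ p ∈ Finset.univ.filter (fun p : Fin n × Fin n => p.1 < p.2), f p := by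
  classical
  have h1 := Finset.sum_filter_add_sum_filter_not (univ : Finset (Fin n × Fin n))
    (fun p => p.1 < p.2) f
  have h2 : ∑ p ∈ univ.filter (fun p : Fin n × Fin n => ¬ p.1 < p.2), f p
      = ∑ p ∈ univ.filter (fun p : Fin n × Fin n => p.2 < p.1), f p := by
    refine (Finset.sum_subset ?_ ?_).symm
    · intro p hp
      simp only [Finset.mem_filter, Finset.mem_univ, true_and] at hp ⊢
      exact not_lt_of_gt hp
    · intro p hp hnp
      simp only [Finset.mem_filter, Finset.mem_univ, true_and] at hp hnp
      have : p.1 = p.2 := le_antisymm (not_lt.1 hnp) (not_lt.1 hp)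
      have hp2 : p = (p.1, p.1) := by rw [Prod.ext_iff]; exact ⟨rfl, this.symm⟩
      rw [hp2, hdiag]
  have h3 : ∑ p ∈ univ.filter (fun p : Fin n × Fin n => p.2 < p.1), f p
      = ∑ p ∈ univ.filter (fun p : Fin n × Fin n => p.1 < p.2), f p := by
    refine Finset.sum_nbij' Prod.swap Prod.swap ?_ ?_ ?_ ?_ ?_
    · intro a ha; simp only [Finset.mem_filter, Finset.mem_univ, true_and] at ha ⊢; exact ha
    · intro a ha; simp only [Finset.mem_filter, Finset.mem_univ, true_and] at ha ⊢; exact ha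
    · intro a _; rfl
    · intro a _; rfl
    · intro a _; exact hsymm a
  rw [← h1, h2, h3]; ring

lemma trace_alpha {n : ℕ} (G : SimpleGraph (Fin n)) (α : ℝ) :
    (alphaDistMatrix G α).trace = 2 * α * wiener G := by
  simp only [Matrix.trace, Matrix.diag, alphaDistMatrix, Matrix.add_apply, Matrix.smul_apply,
    Matrix.diagonal_apply_eq, distMatrix, SimpleGraph.dist_self, Nat.cast_zero, smul_eq_mul,
    mul_zero, add_zero, wiener, transmission]
  rw [← Finset.mul_sum]; ring

lemma trace_alpha_sq {n : ℕ} (G : SimpleGraph (Fin n)) (α : ℝ) :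
    ((alphaDistMatrix G α) * (alphaDistMatrix G α)).trace
      = α ^ 2 * (∑ i, (transmission G i) ^ 2) + 2 * (1 - α) ^ 2 * distSq G := by
  classical
  have hAij : ∀ i j, alphaDistMatrix G α i j
      = α * (if i = j then transmission G i else 0) + (1 - α) * (G.dist i j : ℝ) := by
    intro i j
    simp [alphaDistMatrix, distMatrix, Matrix.diagonal, Matrix.add_apply]
  have key : ∀ i j : Fin n, alphaDistMatrix G α i j * alphaDistMatrix G α j i
      = α ^ 2 * (if i = j then transmission G i ^ 2 else 0)
        + (1 - α) ^ 2 * (G.dist i j : ℝ) ^ 2 := by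
    intro i j
    by_cases h : i = j
    · subst h; simp [hAij, SimpleGraph.dist_self]; ring
    · have h' : ¬ j = i := fun hh => h hh.symm
      have hd : G.dist j i = G.dist i j := SimpleGraph.dist_comm
      simp only [hAij, if_neg h, if_neg h', hd]; ring
  have htr : ((alphaDistMatrix G α) * (alphaDistMatrix G α)).trace
      = ∑ i, ∑ j, alphaDistMatrix G α i j * alphaDistMatrix G α j i := by
    simp [Matrix.trace, Matrix.diag, Matrix.mul_apply]
  rw [htr]
  have : ∑ i, ∑ j, alphaDistMatrix G α i j * alphaDistMatrix G α j i
      = ∑ i, ∑ j, (α ^ 2 * (if i = j then transmission G i ^ 2 else 0)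
          + (1 - α) ^ 2 * (G.dist i j : ℝ) ^ 2) :=
    Finset.sum_congr rfl fun i _ => Finset.sum_congr rfl fun j _ => key i j
  rw [this]
  have hd2 : ∑ i : Fin n, ∑ j : Fin n, (G.dist i j : ℝ) ^ 2 = 2 * distSq G := by
    have hp := Fintype.sum_prod_type (f := fun p : Fin n × Fin n => (G.dist p.1 p.2 : ℝ) ^ 2)
    rw [← hp]
    exact double_sum_eq (fun p => (G.dist p.1 p.2 : ℝ) ^ 2)
      (fun i => by simp) (fun p => by simp [SimpleGraph.dist_comm])
  have e1 : ∀ i : Fin n, ∑ j : Fin n, ((α ^ 2 * if i = j then transmission G i ^ 2 else 0)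
      + (1 - α) ^ 2 * (G.dist i j : ℝ) ^ 2)
      = α ^ 2 * transmission G i ^ 2 + (1 - α) ^ 2 * ∑ j, (G.dist i j : ℝ) ^ 2 := by
    intro i
    rw [Finset.sum_add_distrib, ← Finset.mul_sum, ← Finset.mul_sum, Finset.sum_ite_eq]
    simp
  rw [Finset.sum_congr rfl fun i _ => e1 i, Finset.sum_add_distrib,
    ← Finset.mul_sum, ← Finset.mul_sum, hd2]
  ring

theorem stmt_14 {n : ℕ} (hn : 2 ≤ n) (G : SimpleGraph (Fin n)) (hG : G.Connected)
    (α : ℝ) (hα : α ∈ Set.Icc (0 : ℝ) 1)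
    (hA : (alphaDistMatrix G α).IsHermitian) :
    (∑ i, Real.exp (hA.eigenvalues i)) ≤
      (n : ℝ) + 2 * α * wiener G - 1 -
        Real.sqrt (α ^ 2 * (∑ i, (transmission G i) ^ 2) + 2 * (1 - α) ^ 2 * distSq G) +
        Real.exp
          (Real.sqrt (α ^ 2 * (∑ i, (transmission G i) ^ 2) +
            2 * (1 - α) ^ 2 * distSq G)) := by
  set σ := hA.eigenvalues with hσdef
  set S2 := α ^ 2 * (∑ i, (transmission G i) ^ 2) + 2 * (1 - α) ^ 2 * distSq G with hS2
  have hS2nn : 0 ≤ S2 := by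
    have h1 : 0 ≤ distSq G := Finset.sum_nonneg fun p _ => sq_nonneg _
    have h2 : 0 ≤ ∑ i, transmission G i ^ 2 := Finset.sum_nonneg fun i _ => sq_nonneg _
    rw [hS2]; positivity
  set ω := Real.sqrt S2 with hωdef
  have hωnn : 0 ≤ ω := Real.sqrt_nonneg _
  have hω2 : ω ^ 2 = S2 := Real.sq_sqrt hS2nn
  have htr : ∑ i, σ i = 2 * α * wiener G :=
    (trace_eq_sum_eigen hA).symm.trans (trace_alpha G α)
  have hsq : ∑ i, |σ i| ^ 2 = S2 := by
    simp only [sq_abs]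
    exact (trace_sq_eq_sum_eigen hA).symm.trans (trace_alpha_sq G α)
  have hrem : ∑ i, (Real.exp |σ i| - 1 - |σ i|) ≤ Real.exp ω - 1 - ω :=
    sum_remainder_le (fun i => |σ i|) (fun i => abs_nonneg _) ω hωnn
      (by rw [hω2]; exact le_of_eq hsq)
  have hcard : ∑ _i : Fin n, (1 : ℝ) = (n : ℝ) := by simp
  calc ∑ i, Real.exp (σ i)
      ≤ ∑ i, (1 + σ i + (Real.exp |σ i| - 1 - |σ i|)) :=
        Finset.sum_le_sum fun i _ => exp_le_abs _
    _ = (n : ℝ) + ∑ i, σ i + ∑ i, (Real.exp |σ i| - 1 - |σ i|) := by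
        rw [Finset.sum_add_distrib, Finset.sum_add_distrib, hcard]
    _ ≤ (n : ℝ) + 2 * α * wiener G + (Real.exp ω - 1 - ω) := by
        rw [htr]; linarith
    _ = (n : ℝ) + 2 * α * wiener G - 1 - ω + Real.exp ω := by ring
end

section
/- Let G be a simple undirected connected graph with n ≥ 2 vertices and α ∈ [0,1]. Then the α-distance Estrada index satisfies DEE_α(G) ≥ e^{2W(G)/n} + (n−1) + 2αW(G) − 2W(G)/n. -/
open Finset Matrix Polynomial Real

/-- Sum of eigenvalues of a real symmetric matrix equals its trace. -/
lemma aux_sum_eigenvalues {n : ℕ} (A : Matrix (Fin n) (Fin n) ℝ) (hA : A.IsHermitian) :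
    A.trace = ∑ i, hA.eigenvalues i := by
  conv_lhs => rw [hA.spectral_theorem, Unitary.conjStarAlgAut_apply]
  rw [Matrix.trace_mul_cycle]
  rw [(Matrix.mem_unitaryGroup_iff'.mp (hA.eigenvectorUnitary).2)]
  simp [Matrix.trace, Matrix.diag]

/-- Some eigenvalue of a real symmetric matrix is at least the average entry sum. -/
lemma aux_max_eigenvalue {n : ℕ} (hn : 0 < n) (A : Matrix (Fin n) (Fin n) ℝ)
    (hA : A.IsHermitian) :
    ∃ k, (∑ i, ∑ j, A i j) ≤ hA.eigenvalues k * n := by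
  classical
  set U : Matrix (Fin n) (Fin n) ℝ := (hA.eigenvectorUnitary : Matrix (Fin n) (Fin n) ℝ) with hU
  set c : Fin n → ℝ := fun k => ∑ i, U i k with hc
  have hUU : U * star U = 1 := Matrix.mem_unitaryGroup_iff.mp (hA.eigenvectorUnitary).2
  have hAent : ∀ i j, A i j = ∑ k, hA.eigenvalues k * (U i k * U j k) := by
    intro i j
    conv_lhs => rw [hA.spectral_theorem, Unitary.conjStarAlgAut_apply]
    simp only [Matrix.mul_apply, Matrix.diagonal_apply, Function.comp_apply, Matrix.star_apply,
      star_trivial, RCLike.ofReal_real_eq_id, id, ← hU, mul_ite, mul_zero,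
      Finset.sum_ite_eq', Finset.mem_univ, if_true]
    exact Finset.sum_congr rfl fun k _ => by ring
  have hsum : (∑ i, ∑ j, A i j) = ∑ k, hA.eigenvalues k * (c k)^2 := by
    simp only [hAent]
    calc ∑ i, ∑ j, ∑ k, hA.eigenvalues k * (U i k * U j k)
        = ∑ i, ∑ k, ∑ j, hA.eigenvalues k * (U i k * U j k) :=
          Finset.sum_congr rfl fun i _ => Finset.sum_comm
      _ = ∑ k, ∑ i, ∑ j, hA.eigenvalues k * (U i k * U j k) := Finset.sum_comm
      _ = ∑ k, hA.eigenvalues k * (c k)^2 := by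
          refine Finset.sum_congr rfl fun k _ => ?_
          simp only [hc, sq, Finset.sum_mul_sum, Finset.mul_sum]
          refine Finset.sum_congr rfl fun i _ => ?_
          rw [Finset.sum_mul, Finset.mul_sum]
          exact Finset.sum_congr rfl fun j _ => by ring
  have hc2 : ∑ k, (c k)^2 = (n : ℝ) := by
    have h1 : ∀ i j : Fin n, ∑ k, U i k * U j k = if i = j then (1:ℝ) else 0 := by
      intro i j
      have := congrFun (congrFun hUU i) j
      simpa [Matrix.mul_apply, Matrix.star_apply, Matrix.one_apply] using this
    calc ∑ k, (c k)^2 = ∑ k, ∑ i, ∑ j, U i k * U j k := by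
          refine Finset.sum_congr rfl fun k _ => ?_
          simp only [hc, sq]
          rw [Finset.sum_mul_sum]
      _ = ∑ i, ∑ j, ∑ k, U i k * U j k := by
          rw [Finset.sum_comm]; exact Finset.sum_congr rfl fun i _ => Finset.sum_comm
      _ = (n : ℝ) := by simp [h1]
  obtain ⟨k, -, hk⟩ := Finset.exists_max_image Finset.univ hA.eigenvalues
    ⟨⟨0, hn⟩, Finset.mem_univ _⟩
  refine ⟨k, ?_⟩
  calc (∑ i, ∑ j, A i j) = ∑ m, hA.eigenvalues m * (c m)^2 := hsum
    _ ≤ ∑ m, hA.eigenvalues k * (c m)^2 :=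
        Finset.sum_le_sum fun m _ =>
          mul_le_mul_of_nonneg_right (hk m (Finset.mem_univ m)) (sq_nonneg _)
    _ = hA.eigenvalues k * n := by rw [← Finset.mul_sum, hc2]

theorem stmt_16 {n : ℕ} (hn : 2 ≤ n) (G : SimpleGraph (Fin n)) (hG : G.Connected)
    (α : ℝ) (hα : α ∈ Set.Icc (0 : ℝ) 1)
    (hA : (alphaDistMatrix G α).IsHermitian) :
    Real.exp (2 * wiener G / n) + ((n : ℝ) - 1) + 2 * α * wiener G - 2 * wiener G / n ≤
      ∑ i, Real.exp (hA.eigenvalues i) := by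
  classical
  have hnpos : (0 : ℝ) < n := by exact_mod_cast lt_of_lt_of_le (by norm_num) hn
  have hn0 : 0 < n := lt_of_lt_of_le (by norm_num) hn
  set A := alphaDistMatrix G α with hAdef
  -- transmission sum = 2W
  have htr : ∑ i, transmission G i = 2 * wiener G := by
    simp only [transmission, wiener]; ring
  -- trace = 2αW
  have htrace : A.trace = 2 * α * wiener G := by
    have hdiag : ∀ i, A i i = α * transmission G i := by
      intro i
      simp [hAdef, alphaDistMatrix, distMatrix, Matrix.diagonal_apply, SimpleGraph.dist_self]
    calc A.trace = ∑ i, A i i := rfl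
      _ = ∑ i, α * transmission G i := Finset.sum_congr rfl fun i _ => hdiag i
      _ = α * (2 * wiener G) := by rw [← Finset.mul_sum, htr]
      _ = 2 * α * wiener G := by ring
  have hsum_eig : ∑ i, hA.eigenvalues i = 2 * α * wiener G := by
    rw [← aux_sum_eigenvalues _ hA, htrace]
  -- total entry sum = 2W
  have hS : (∑ i, ∑ j, A i j) = 2 * wiener G := by
    have h1 : ∀ i, ∑ j, A i j = α * transmission G i + (1 - α) * transmission G i := by
      intro i
      simp only [hAdef, alphaDistMatrix, Matrix.add_apply, Matrix.smul_apply, smul_eq_mul]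
      rw [Finset.sum_add_distrib]
      have dd1 : ∑ j, Matrix.diagonal (transmission G) i j = transmission G i := by
        simp [Matrix.diagonal_apply]
      have dd2 : ∑ j, distMatrix G i j = transmission G i := by
        simp [distMatrix, transmission]
      rw [← Finset.mul_sum, ← Finset.mul_sum, dd1, dd2]
    calc (∑ i, ∑ j, A i j) = ∑ i, (α * transmission G i + (1 - α) * transmission G i) :=
          Finset.sum_congr rfl fun i _ => h1 i
      _ = ∑ i, transmission G i := Finset.sum_congr rfl fun i _ => by ring
      _ = 2 * wiener G := htr
  -- wiener ≥ 0
  have hW : 0 ≤ wiener G := by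
    apply mul_nonneg (by norm_num)
    exact Finset.sum_nonneg fun i _ => Finset.sum_nonneg fun j _ => by positivity
  set cc : ℝ := 2 * wiener G / n with hcc
  have hcc0 : 0 ≤ cc := by positivity
  obtain ⟨k, hk⟩ := aux_max_eigenvalue hn0 A hA
  have hk' : cc ≤ hA.eigenvalues k := by
    rw [hcc, div_le_iff₀ hnpos, ← hS]; linarith [hk]
  -- final estimate
  have key : Real.exp cc - cc ≤ Real.exp (hA.eigenvalues k) - hA.eigenvalues k := by
    have h1 : Real.exp cc * (hA.eigenvalues k - cc) ≤ Real.exp (hA.eigenvalues k) - Real.exp cc := by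
      have := Real.add_one_le_exp (hA.eigenvalues k - cc)
      have h2 : Real.exp cc * (hA.eigenvalues k - cc + 1) ≤ Real.exp cc * Real.exp (hA.eigenvalues k - cc) :=
        mul_le_mul_of_nonneg_left this (Real.exp_nonneg cc)
      rw [← Real.exp_add] at h2
      have : cc + (hA.eigenvalues k - cc) = hA.eigenvalues k := by ring
      rw [this] at h2
      nlinarith
    have h3 : (1 : ℝ) ≤ Real.exp cc := Real.one_le_exp hcc0
    nlinarith [hk']
  have hsplit : ∑ i, Real.exp (hA.eigenvalues i)
      = Real.exp (hA.eigenvalues k) + ∑ i ∈ Finset.univ.erase k, Real.exp (hA.eigenvalues i) := by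
    exact (Finset.add_sum_erase _ _ (Finset.mem_univ k)).symm
  have hrest : ∑ i ∈ Finset.univ.erase k, (hA.eigenvalues i + 1)
      ≤ ∑ i ∈ Finset.univ.erase k, Real.exp (hA.eigenvalues i) :=
    Finset.sum_le_sum fun i _ => by linarith [Real.add_one_le_exp (hA.eigenvalues i)]
  have herase : ∑ i ∈ Finset.univ.erase k, (hA.eigenvalues i + 1)
      = (2 * α * wiener G - hA.eigenvalues k) + ((n : ℝ) - 1) := by
    rw [Finset.sum_add_distrib]
    have e1 : ∑ i ∈ Finset.univ.erase k, hA.eigenvalues i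
        = (∑ i, hA.eigenvalues i) - hA.eigenvalues k := by
      rw [← Finset.add_sum_erase _ _ (Finset.mem_univ k)]; ring
    have e2 : ∑ _i ∈ Finset.univ.erase k, (1 : ℝ) = (n : ℝ) - 1 := by
      rw [Finset.sum_const, Finset.card_erase_of_mem (Finset.mem_univ k)]
      simp [Finset.card_univ, Nat.cast_sub (by omega : 1 ≤ n)]
    rw [e1, e2, hsum_eig]
  calc Real.exp cc + ((n : ℝ) - 1) + 2 * α * wiener G - cc
      ≤ Real.exp (hA.eigenvalues k) + ((n : ℝ) - 1) + 2 * α * wiener G - hA.eigenvalues k := by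
        linarith [key]
    _ = Real.exp (hA.eigenvalues k) + ∑ i ∈ Finset.univ.erase k, (hA.eigenvalues i + 1) := by
        rw [herase]; ring
    _ ≤ Real.exp (hA.eigenvalues k) + ∑ i ∈ Finset.univ.erase k, Real.exp (hA.eigenvalues i) := by
        linarith [hrest]
    _ = ∑ i, Real.exp (hA.eigenvalues i) := hsplit.symm
end

section
/- Let G be a simple undirected connected transmission regular graph with n ≥ 2 vertices, with Tr(u) = r for every vertex u, and let α ∈ [0,1]. Then the α-distance Estrada index satisfies DEE_α(G) ≥ e^r + (n−1) + αnr − r. -/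
open Finset Matrix Polynomial Real

lemma aux_mem_spectrum {n : ℕ} (A : Matrix (Fin n) (Fin n) ℝ) (r : ℝ)
    (h : A *ᵥ (fun _ => (1:ℝ)) = r • (fun _ => (1:ℝ))) (hn : 0 < n) : r ∈ spectrum ℝ A := by
  rw [spectrum.mem_iff]
  intro hu
  rw [Matrix.isUnit_iff_isUnit_det, isUnit_iff_ne_zero, ne_eq,
    ← Matrix.exists_mulVec_eq_zero_iff] at hu
  apply hu
  refine ⟨fun _ => 1, ?_, ?_⟩
  · intro hv
    have := congrFun hv ⟨0, hn⟩
    simp at this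
  · funext i
    have := congrFun h i
    simp only [Pi.smul_apply, smul_eq_mul, mul_one] at this
    simp [Matrix.sub_mulVec, Matrix.algebraMap_matrix_apply, Matrix.mulVec, dotProduct,
      Finset.sum_ite_eq]
    simp [Matrix.mulVec, dotProduct] at this; linarith

lemma aux_sum_eig {n : ℕ} (A : Matrix (Fin n) (Fin n) ℝ) (hA : A.IsHermitian) :
    ∑ i, hA.eigenvalues i = A.trace := by
  conv_rhs => rw [hA.spectral_theorem]
  rw [← hA.spectral_theorem, hA.trace_eq_sum_eigenvalues]
  simp

theorem stmt_17 {n : ℕ} (hn : 2 ≤ n) (G : SimpleGraph (Fin n)) (hG : G.Connected)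
    (r : ℝ) (hreg : ∀ i : Fin n, transmission G i = r)
    (α : ℝ) (hα : α ∈ Set.Icc (0 : ℝ) 1)
    (hA : (alphaDistMatrix G α).IsHermitian) :
    Real.exp r + ((n : ℝ) - 1) + α * (n : ℝ) * r - r ≤
      ∑ i, Real.exp (hA.eigenvalues i) := by
  have hn0 : 0 < n := by omega
  set A := alphaDistMatrix G α with hAdef
  -- row sums are r
  have hrow : A *ᵥ (fun _ => (1:ℝ)) = r • (fun _ => (1:ℝ)) := by
    funext i
    simp only [hAdef, alphaDistMatrix, Matrix.mulVec, dotProduct, Pi.smul_apply, smul_eq_mul,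
      mul_one, Matrix.add_apply, Matrix.smul_apply, Matrix.diagonal_apply]
    rw [Finset.sum_add_distrib]
    have h1 : ∑ j, (α * if i = j then transmission G i else 0) = α * r := by
      simp [Finset.sum_ite_eq, hreg i]
    have h2 : ∑ j, ((1 - α) * distMatrix G i j) = (1 - α) * r := by
      simp only [← Finset.mul_sum]
      have : ∑ j, distMatrix G i j = transmission G i := by
        simp [distMatrix, transmission]
      rw [this, hreg i]
    rw [h1, h2]; ring
  -- r is an eigenvalue
  obtain ⟨i0, hi0⟩ : ∃ i, hA.eigenvalues i = r := by
    have := aux_mem_spectrum A r hrow hn0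
    rwa [hA.spectrum_real_eq_range_eigenvalues] at this
  -- trace
  have htr : ∑ i, hA.eigenvalues i = α * n * r := by
    rw [aux_sum_eig A hA, Matrix.trace]
    have : ∀ i, A.diag i = α * r := by
      intro i
      simp [hAdef, alphaDistMatrix, Matrix.diag, distMatrix, hreg i]
    simp only [this, Finset.sum_const, Finset.card_univ, Fintype.card_fin, nsmul_eq_mul]
    ring
  -- final estimate
  rw [← Finset.add_sum_erase _ _ (Finset.mem_univ i0), hi0]
  have hbound : ((n:ℝ) - 1) + (α * n * r - r) ≤ ∑ i ∈ Finset.univ.erase i0, Real.exp (hA.eigenvalues i) := by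
    calc ((n:ℝ) - 1) + (α * n * r - r)
        = ∑ i ∈ Finset.univ.erase i0, (1 + hA.eigenvalues i) := by
          rw [Finset.sum_add_distrib, Finset.sum_const, Finset.sum_erase_eq_sub (Finset.mem_univ i0),
            htr, hi0, Finset.card_erase_of_mem (Finset.mem_univ i0), Finset.card_univ,
            Fintype.card_fin]
          have : ((n - 1 : ℕ) : ℝ) = (n : ℝ) - 1 := by
            rw [Nat.cast_sub (by omega)]; simp
          simp [this]
      _ ≤ ∑ i ∈ Finset.univ.erase i0, Real.exp (hA.eigenvalues i) := by
          apply Finset.sum_le_sum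
          intro i _
          rw [add_comm]
          exact Real.add_one_le_exp _
  linarith
end
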